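/- arXiv:1906.02449 — 3 statements merged into one kernel-verified Lean document; each statement's English description precedes it below -/
import Mathlib

section
/- Let X be a Banach space containing no isomorphic copy of c₀, and let ∑ x_n be a series in X which is not unconditionally convergent. Then the sets E = {s ∈ S : (∑_{i=1}^n x_{s(i)})_n is bounded} and F = {p ∈ P : (∑_{i=1}^n x_{p(i)})_n is bounded} are meager in S and P respectively. -/
open Filter

/-- `S`, the Polish space of strictly increasing functions `ℕ → ℕ`. -/
abbrev IncSeq : Type := {s : ℕ → ℕ // StrictMono s}

/-- `P`, the Polish space of bijections `ℕ → ℕ`. -/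
abbrev BijSeq : Type := {p : ℕ → ℕ // Function.Bijective p}

/-- A Banach space contains an isomorphic copy of `c₀` if there is a continuous
linear map from `c₀ = C₀(ℕ, ℝ)` into it which is bounded below (an isomorphic
embedding). -/
def ContainsCopyOfC0 (X : Type*) [NormedAddCommGroup X] [NormedSpace ℝ X] : Prop :=
  ∃ T : ZeroAtInftyContinuousMap ℕ ℝ →L[ℝ] X, ∃ c > (0 : ℝ),
    ∀ v : ZeroAtInftyContinuousMap ℕ ℝ, c * ‖v‖ ≤ ‖T v‖

/-- A series `∑ x n` is unconditionally convergent if every rearrangement converges. -/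
def UnconditionallyConvergent {X : Type*} [NormedAddCommGroup X] (x : ℕ → X) : Prop :=
  ∀ p : Equiv.Perm ℕ, ∃ L : X,
    Tendsto (fun n => ∑ i ∈ Finset.range n, x (p i)) atTop (nhds L)

section AuxiliaryLemmas

open Finset Topology ZeroAtInftyContinuousMap

set_option linter.unusedSectionVars false

noncomputable section

variable {X : Type*} [NormedAddCommGroup X] [NormedSpace ℝ X]

lemma aux_abs_sum_le (x : ℕ → X) (M₀ : ℝ)
    (hM : ∀ G : Finset ℕ, ‖∑ i ∈ G, x i‖ ≤ M₀)
    (f : X →L[ℝ] ℝ) (B : ℕ → Finset ℕ)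
    (hdisj : ∀ i j, i ≠ j → Disjoint (B i) (B j))
    (T : Finset ℕ) :
    ∑ k ∈ T, |f (∑ i ∈ B k, x i)| ≤ 2 * M₀ * ‖f‖ := by
  classical
  set u : ℕ → X := fun k => ∑ i ∈ B k, x i with hu
  have hbound : ∀ (T' : Finset ℕ), ‖∑ k ∈ T', u k‖ ≤ M₀ := by
    intro T'
    have : ∑ k ∈ T', u k = ∑ i ∈ T'.biUnion B, x i := by
      rw [Finset.sum_biUnion]
      intro i hi j hj hij
      exact hdisj i j hij
    rw [this]; exact hM _
  have key : ∀ (T' : Finset ℕ), f (∑ k ∈ T', u k) ≤ M₀ * ‖f‖ := by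
    intro T'
    calc f (∑ k ∈ T', u k) ≤ ‖f (∑ k ∈ T', u k)‖ := le_abs_self _
    _ ≤ ‖f‖ * ‖∑ k ∈ T', u k‖ := f.le_opNorm _
    _ ≤ ‖f‖ * M₀ := by
        exact mul_le_mul_of_nonneg_left (hbound T') (norm_nonneg f)
    _ = M₀ * ‖f‖ := mul_comm _ _
  have h1 : ∑ k ∈ T, |f (u k)| =
      f (∑ k ∈ T.filter (fun k => 0 ≤ f (u k)), u k)
      - f (∑ k ∈ T.filter (fun k => ¬ 0 ≤ f (u k)), u k) := by
    rw [map_sum, map_sum,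
      ← Finset.sum_filter_add_sum_filter_not T (fun k => 0 ≤ f (u k)) (fun k => |f (u k)|),
      sub_eq_add_neg, ← Finset.sum_neg_distrib]
    congr 1
    · exact Finset.sum_congr rfl fun k hk => abs_of_nonneg (Finset.mem_filter.1 hk).2
    · exact Finset.sum_congr rfl fun k hk =>
        (abs_of_neg (lt_of_not_ge (Finset.mem_filter.1 hk).2)).trans rfl
  rw [h1]
  have h2 : - f (∑ k ∈ T.filter (fun k => ¬ 0 ≤ f (u k)), u k) ≤ M₀ * ‖f‖ := by
    set T' := T.filter (fun k => ¬ 0 ≤ f (u k))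
    calc - f (∑ k ∈ T', u k) ≤ |f (∑ k ∈ T', u k)| := neg_le_abs _
    _ ≤ ‖f‖ * ‖∑ k ∈ T', u k‖ := f.le_opNorm _
    _ ≤ ‖f‖ * M₀ := mul_le_mul_of_nonneg_left (hbound T') (norm_nonneg f)
    _ = M₀ * ‖f‖ := mul_comm _ _
  nlinarith [key (T.filter (fun k => 0 ≤ f (u k)))]


lemma aux_smul_sum_le (x : ℕ → X) (M₀ : ℝ)
    (hM : ∀ G : Finset ℕ, ‖∑ i ∈ G, x i‖ ≤ M₀)
    (B : ℕ → Finset ℕ)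
    (hdisj : ∀ i j, i ≠ j → Disjoint (B i) (B j))
    (T : Finset ℕ) (a : ℕ → ℝ) (c : ℝ) (hc : 0 ≤ c)
    (ha : ∀ k ∈ T, |a k| ≤ c) :
    ‖∑ k ∈ T, a k • (∑ i ∈ B k, x i)‖ ≤ 2 * M₀ * c := by
  classical
  set u : ℕ → X := fun k => ∑ i ∈ B k, x i with hu
  obtain ⟨f, hf1, hfz⟩ := exists_dual_vector'' ℝ (∑ k ∈ T, a k • u k)
  have hM0 : (0:ℝ) ≤ M₀ := by simpa using hM ∅
  have hfz' : f (∑ k ∈ T, a k • u k) = ‖∑ k ∈ T, a k • u k‖ := by exact_mod_cast hfz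
  have heq : ‖∑ k ∈ T, a k • (∑ i ∈ B k, x i)‖ = ∑ k ∈ T, a k * f (u k) := by
    show ‖∑ k ∈ T, a k • u k‖ = _
    rw [← hfz', map_sum]
    exact Finset.sum_congr rfl fun k _ => by simp
  rw [heq]
  calc ∑ k ∈ T, a k * f (u k) ≤ ∑ k ∈ T, c * |f (u k)| := by
        refine Finset.sum_le_sum fun k hk => ?_
        calc a k * f (u k) ≤ |a k * f (u k)| := le_abs_self _
        _ = |a k| * |f (u k)| := abs_mul _ _
        _ ≤ c * |f (u k)| := mul_le_mul_of_nonneg_right (ha k hk) (abs_nonneg _)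
  _ = c * ∑ k ∈ T, |f (u k)| := by rw [Finset.mul_sum]
  _ ≤ c * (2 * M₀ * ‖f‖) := by
        refine mul_le_mul_of_nonneg_left ?_ hc
        exact aux_abs_sum_le x M₀ hM f B hdisj T
  _ ≤ c * (2 * M₀ * 1) := by
        refine mul_le_mul_of_nonneg_left ?_ hc
        exact mul_le_mul_of_nonneg_left hf1 (by positivity)
  _ = 2 * M₀ * c := by ring


lemma aux_step (M₀ ε : ℝ) (hε : 0 < ε) (w : ℕ → X)
    (hw : ∀ t, ε ≤ ‖w t‖)
    (hfun : ∀ (f : X →L[ℝ] ℝ) (T : Finset ℕ), ∑ t ∈ T, |f (w t)| ≤ 2 * M₀ * ‖f‖)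
    (E : Submodule ℝ X) (hE : FiniteDimensional ℝ E)
    (δ : ℝ) (hδ : 0 < δ) (K : ℕ) :
    ∃ t, K ≤ t ∧ ∀ y ∈ E, ∀ r : ℝ, ‖y‖ ≤ (1 + δ) * ‖y + r • w t‖ := by
  classical
  have h1δ : (0:ℝ) < 1 + δ := by linarith
  -- M₀ is positive
  have hw0 : w 0 ≠ 0 := by
    intro h
    have := hw 0
    rw [h, norm_zero] at this
    linarith
  have hM0 : 0 < M₀ := by
    obtain ⟨g, hg1, hgz⟩ := exists_dual_vector ℝ (w 0) (norm_ne_zero_iff.2 hw0)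
    have hgz' : g (w 0) = ‖w 0‖ := by exact_mod_cast hgz
    have := hfun g {0}
    rw [Finset.sum_singleton, hgz', hg1, mul_one] at this
    have h2 := hw 0
    rw [abs_of_nonneg (by positivity)] at this
    linarith
  set δ'' : ℝ := δ / (4 * (1 + δ)) with hδ''def
  set δ' : ℝ := ε * δ / (8 * (1 + δ)) with hδ'def
  have hδ''pos : 0 < δ'' := by positivity
  have hδ'pos : 0 < δ' := by positivity
  -- compact sphere of E and a finite net
  set Qset : Set X := Subtype.val '' (Metric.sphere (0:E) 1) with hQdef
  have hQmem : ∀ y, y ∈ Qset ↔ y ∈ E ∧ ‖y‖ = 1 := by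
    intro y
    constructor
    · rintro ⟨z, hz, rfl⟩
      rw [mem_sphere_iff_norm, sub_zero] at hz
      exact ⟨z.2, hz⟩
    · rintro ⟨hyE, hy1⟩
      exact ⟨⟨y, hyE⟩, by rwa [mem_sphere_iff_norm, sub_zero], rfl⟩
  have hQcomp : IsCompact Qset := (isCompact_sphere (0:E) 1).image continuous_subtype_val
  obtain ⟨net, hnetsub, hnetfin, hnetcov⟩ :=
    hQcomp.elim_finite_subcover_image (ι := X) (b := Qset)
      (c := fun y => Metric.ball y δ'')
      (fun y _ => Metric.isOpen_ball)
      (by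
        intro y hy
        exact Set.mem_biUnion hy (Metric.mem_ball_self hδ''pos))
  set tF : Finset X := hnetfin.toFinset with htFdef
  -- norming functionals for net points
  set φ : X → (X →L[ℝ] ℝ) := fun z =>
    if h : z = (0:X) then 0 else Classical.choose (exists_dual_vector ℝ z (norm_ne_zero_iff.2 h)) with hφdef
  have hφspec : ∀ z : X, z ≠ 0 → ‖φ z‖ = 1 ∧ φ z z = ‖z‖ := by
    intro z hz
    have := Classical.choose_spec (exists_dual_vector ℝ z (norm_ne_zero_iff.2 hz))
    rw [hφdef]
    simp only [dif_neg hz]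
    exact ⟨this.1, by exact_mod_cast this.2⟩
  have hnet0 : ∀ z ∈ tF, z ≠ 0 ∧ ‖z‖ = 1 := by
    intro z hz
    rw [htFdef, Set.Finite.mem_toFinset] at hz
    have := ((hQmem z).1 (hnetsub hz)).2
    exact ⟨fun h0 => by rw [h0, norm_zero] at this; linarith, this⟩
  -- pigeonhole: find a far block almost annihilated by all net functionals
  set r : ℕ := tF.card with hrdef
  set Tnum : ℕ := Nat.ceil ((2 * M₀ * r) / δ') + 1 with hTdef
  set W : Finset ℕ := (Finset.range Tnum).image (fun j => K + j) with hWdef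
  have hWcard : W.card = Tnum := by
    rw [hWdef, Finset.card_image_of_injective _ (add_right_injective K), Finset.card_range]
  have htotal : ∑ t ∈ W, ∑ z ∈ tF, |φ z (w t)| ≤ 2 * M₀ * r := by
    rw [Finset.sum_comm]
    calc ∑ z ∈ tF, ∑ t ∈ W, |φ z (w t)| ≤ ∑ z ∈ tF, 2 * M₀ * 1 := by
          refine Finset.sum_le_sum fun z hz => ?_
          have h1 := hfun (φ z) W
          rw [(hφspec z (hnet0 z hz).1).1] at h1
          exact h1
    _ = 2 * M₀ * r := by rw [Finset.sum_const, nsmul_eq_mul, mul_one]; ring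
  have hpigeon : ∃ t₀ ∈ W, ∑ z ∈ tF, |φ z (w t₀)| ≤ δ' := by
    by_contra hcon
    push_neg at hcon
    have hWne : W.Nonempty := by
      rw [← Finset.card_pos, hWcard, hTdef]; omega
    have h2 : ∑ t ∈ W, δ' < ∑ t ∈ W, ∑ z ∈ tF, |φ z (w t)| :=
      Finset.sum_lt_sum_of_nonempty hWne fun t ht => hcon t ht
    rw [Finset.sum_const, hWcard, nsmul_eq_mul] at h2
    have h3 : (2 * M₀ * r) / δ' ≤ (Nat.ceil ((2 * M₀ * r) / δ') : ℝ) := Nat.le_ceil _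
    have h4 : ((Tnum : ℕ) : ℝ) = (Nat.ceil ((2 * M₀ * r) / δ') : ℝ) + 1 := by
      rw [hTdef]; push_cast; ring
    have h5 : (2 * M₀ * r) / δ' * δ' = 2 * M₀ * r := by
      field_simp
    nlinarith [h2, htotal]
  obtain ⟨t₀, ht₀W, ht₀⟩ := hpigeon
  have hKt₀ : K ≤ t₀ := by
    rw [hWdef] at ht₀W
    obtain ⟨j, _, rfl⟩ := Finset.mem_image.1 ht₀W
    omega
  refine ⟨t₀, hKt₀, ?_⟩
  -- the key inequality for unit vectors
  have h1 : ∀ y', y' ∈ E → ‖y'‖ = 1 → ∀ s : ℝ, 1 ≤ (1 + δ) * ‖y' + s • w t₀‖ := by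
    intro y' hy'E hy'1 s
    by_cases hs : |s| ≤ 2 / ε
    · -- small coefficient: use net functionals
      have hy'Q : y' ∈ Qset := (hQmem y').2 ⟨hy'E, hy'1⟩
      have := hnetcov hy'Q
      obtain ⟨z, hznet, hyz⟩ := Set.mem_iUnion₂.1 this
      have hztF : z ∈ tF := by rw [htFdef, Set.Finite.mem_toFinset]; exact hznet
      obtain ⟨hz0, hz1⟩ := hnet0 z hztF
      obtain ⟨hφ1, hφz⟩ := hφspec z hz0
      have hφb : |φ z (w t₀)| ≤ δ' :=
        le_trans (Finset.single_le_sum (f := fun z => |φ z (w t₀)|) (fun z _ => abs_nonneg _) hztF) ht₀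
      have hdist : ‖y' - z‖ < δ'' := by
        rw [← dist_eq_norm]; exact hyz
      have hexp : φ z (y' + s • w t₀) = φ z z + φ z (y' - z) + s * φ z (w t₀) := by
        rw [map_add, map_smul]
        simp only [smul_eq_mul]
        have : φ z y' = φ z z + φ z (y' - z) := by rw [map_sub]; ring
        rw [this]
      have hb1 : |φ z (y' - z)| ≤ δ'' := by
        calc |φ z (y' - z)| ≤ ‖φ z‖ * ‖y' - z‖ := (φ z).le_opNorm _
        _ = ‖y' - z‖ := by rw [hφ1, one_mul]
        _ ≤ δ'' := hdist.le
      have hb2 : |s * φ z (w t₀)| ≤ (2/ε) * δ' := by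
        rw [abs_mul]
        have h2ε : (0:ℝ) ≤ 2/ε := by positivity
        exact mul_le_mul hs hφb (abs_nonneg _) h2ε
      have hlb : 1 - (δ'' + (2/ε) * δ') ≤ ‖y' + s • w t₀‖ := by
        have hval : 1 - (δ'' + (2/ε) * δ') ≤ φ z (y' + s • w t₀) := by
          rw [hexp, hφz, hz1]
          have := abs_le.1 hb1
          have := abs_le.1 hb2
          linarith [(abs_le.1 hb1).1, (abs_le.1 hb2).1]
        calc 1 - (δ'' + (2/ε) * δ') ≤ φ z (y' + s • w t₀) := hval
        _ ≤ |φ z (y' + s • w t₀)| := le_abs_self _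
        _ ≤ ‖φ z‖ * ‖y' + s • w t₀‖ := (φ z).le_opNorm _
        _ = ‖y' + s • w t₀‖ := by rw [hφ1, one_mul]
      have hDval : (1 + δ) * (1 - (δ'' + (2/ε) * δ')) = 1 + δ/2 := by
        rw [hδ''def, hδ'def]
        field_simp
        ring
      calc (1:ℝ) ≤ 1 + δ/2 := by linarith
      _ = (1 + δ) * (1 - (δ'' + (2/ε) * δ')) := hDval.symm
      _ ≤ (1 + δ) * ‖y' + s • w t₀‖ := mul_le_mul_of_nonneg_left hlb h1δ.le
    · -- large coefficient
      push_neg at hs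
      have hsw : 2 ≤ ‖s • w t₀‖ := by
        rw [norm_smul]
        calc (2:ℝ) = (2/ε) * ε := by field_simp
        _ ≤ |s| * ‖w t₀‖ := mul_le_mul hs.le (hw t₀) hε.le (abs_nonneg _)
        _ = ‖s‖ * ‖w t₀‖ := by rw [Real.norm_eq_abs]
      have hnb : 1 ≤ ‖y' + s • w t₀‖ := by
        have := norm_sub_le (y' + s • w t₀) y'
        simp only [add_sub_cancel_left] at this
        linarith
      calc (1:ℝ) = 1 * 1 := (one_mul 1).symm
      _ ≤ (1 + δ) * ‖y' + s • w t₀‖ := mul_le_mul (by linarith) hnb zero_le_one h1δ.le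
  -- reduce general vectors to unit vectors
  intro y hy rr
  rcases eq_or_ne y 0 with rfl | hy0
  · rw [norm_zero]; positivity
  · have hc : 0 < ‖y‖ := norm_pos_iff.2 hy0
    have hy' := h1 ((‖y‖)⁻¹ • y) (E.smul_mem _ hy)
      (by rw [norm_smul, norm_inv, norm_norm, inv_mul_cancel₀ hc.ne'])
      ((‖y‖)⁻¹ * rr)
    have hcomb : ‖y‖ • ((‖y‖)⁻¹ • y + ((‖y‖)⁻¹ * rr) • w t₀) = y + rr • w t₀ := by
      rw [smul_add, smul_smul, smul_smul, mul_inv_cancel₀ hc.ne', one_smul]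
      congr 1
      rw [← mul_assoc, mul_inv_cancel₀ hc.ne', one_mul]
    calc ‖y‖ = ‖y‖ * 1 := (mul_one _).symm
    _ ≤ ‖y‖ * ((1 + δ) * ‖(‖y‖)⁻¹ • y + ((‖y‖)⁻¹ * rr) • w t₀‖) :=
        mul_le_mul_of_nonneg_left hy' hc.le
    _ = (1 + δ) * (‖y‖ * ‖(‖y‖)⁻¹ • y + ((‖y‖)⁻¹ * rr) • w t₀‖) := by ring
    _ = (1 + δ) * ‖y + rr • w t₀‖ := by
        rw [← hcomb, norm_smul, Real.norm_eq_abs, abs_of_pos hc]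


lemma aux_contains_c0 [CompleteSpace X] (x : ℕ → X) (M₀ : ℝ)
    (hM : ∀ G : Finset ℕ, ‖∑ i ∈ G, x i‖ ≤ M₀) (p : Equiv.Perm ℕ)
    (hdiv : ¬ ∃ L : X, Tendsto (fun n => ∑ i ∈ Finset.range n, x (p i)) atTop (nhds L)) :
    ContainsCopyOfC0 X := by
  classical
  have hM0 : (0:ℝ) ≤ M₀ := by simpa using hM ∅
  set S : ℕ → X := fun n => ∑ i ∈ Finset.range n, x (p i) with hSdef
  have hnC : ¬ CauchySeq S := fun h => hdiv (cauchySeq_tendsto_of_complete h)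
  rw [Metric.cauchySeq_iff] at hnC
  push_neg at hnC
  obtain ⟨ε, hε, hnc⟩ := hnC
  have hblocks : ∀ K, ∃ mn : ℕ × ℕ, K ≤ mn.1 ∧ mn.1 < mn.2 ∧ ε ≤ ‖S mn.2 - S mn.1‖ := by
    intro K
    obtain ⟨m, hm, n, hn, hmn⟩ := hnc K
    rcases lt_trichotomy m n with h | h | h
    · refine ⟨(m, n), hm, h, ?_⟩
      have : dist (S m) (S n) = ‖S n - S m‖ := by rw [dist_eq_norm, norm_sub_rev]
      rw [← this]; exact hmn
    · exfalso; rw [h, dist_self] at hmn; linarith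
    · refine ⟨(n, m), hn, h, ?_⟩
      have : dist (S m) (S n) = ‖S m - S n‖ := dist_eq_norm _ _
      rw [← this]; exact hmn
  set cf : ℕ × ℕ → ℕ × ℕ := fun q => Classical.choose (hblocks q.2) with hcfdef
  set cSeq : ℕ → ℕ × ℕ := fun t => cf^[t] (Classical.choose (hblocks 0)) with hcSeqdef
  have hcf : ∀ q : ℕ × ℕ, q.2 ≤ (cf q).1 ∧ (cf q).1 < (cf q).2 ∧ ε ≤ ‖S (cf q).2 - S (cf q).1‖ :=
    fun q => Classical.choose_spec (hblocks q.2)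
  have hcSeq0 : cSeq 0 = Classical.choose (hblocks 0) := rfl
  have hcSeqsucc : ∀ t, cSeq (t+1) = cf (cSeq t) := fun t => Function.iterate_succ_apply' cf t _
  have hc1 : ∀ t, (cSeq t).1 < (cSeq t).2 := by
    intro t
    cases t with
    | zero => exact (Classical.choose_spec (hblocks 0)).2.1
    | succ t => rw [hcSeqsucc t]; exact (hcf (cSeq t)).2.1
  have hc2 : ∀ t, ε ≤ ‖S (cSeq t).2 - S (cSeq t).1‖ := by
    intro t
    cases t with
    | zero => exact (Classical.choose_spec (hblocks 0)).2.2
    | succ t => rw [hcSeqsucc t]; exact (hcf (cSeq t)).2.2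
  have hc3 : ∀ t t', t < t' → (cSeq t).2 ≤ (cSeq t').1 := by
    intro t t' h
    induction t' with
    | zero => omega
    | succ t'' ih =>
      rcases Nat.lt_succ_iff_lt_or_eq.1 h with h' | h'
      · have h1 := ih h'
        have h2 := hc1 t''
        have h3 : (cSeq t'').2 ≤ (cSeq (t''+1)).1 := by
          rw [hcSeqsucc t'']; exact (hcf (cSeq t'')).1
        omega
      · subst h'
        rw [hcSeqsucc t]; exact (hcf (cSeq t)).1
  set w : ℕ → X := fun t => S (cSeq t).2 - S (cSeq t).1 with hwdef
  set B₀ : ℕ → Finset ℕ := fun t => (Finset.Ico (cSeq t).1 (cSeq t).2).image p with hB₀def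
  have hblocksum : ∀ m n : ℕ, m ≤ n →
      S n - S m = ∑ i ∈ (Finset.Ico m n).image p, x i := by
    intro m n hmn
    rw [Finset.sum_image (fun a _ b _ h => p.injective h)]
    rw [Finset.sum_Ico_eq_sub (fun i => x (p i)) hmn]
  have hwB : ∀ t, w t = ∑ i ∈ B₀ t, x i := fun t => hblocksum _ _ (hc1 t).le
  have hB₀disj : ∀ t t', t ≠ t' → Disjoint (B₀ t) (B₀ t') := by
    intro t t' hne
    rw [Finset.disjoint_left]
    rintro a ha ha'
    simp only [hB₀def, Finset.mem_image, Finset.mem_Ico] at ha ha'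
    obtain ⟨i, hi, rfl⟩ := ha
    obtain ⟨j, hj, hij⟩ := ha'
    have : i = j := p.injective hij.symm
    subst this
    rcases Nat.lt_or_ge t t' with h | h
    · have := hc3 t t' h; omega
    · have ht' : t' < t := by omega
      have := hc3 t' t ht'; omega
  have hwnorm : ∀ t, ε ≤ ‖w t‖ := hc2
  have hwfun : ∀ (f : X →L[ℝ] ℝ) (T : Finset ℕ), ∑ t ∈ T, |f (w t)| ≤ 2 * M₀ * ‖f‖ := by
    intro f T
    have h := aux_abs_sum_le x M₀ hM f B₀ hB₀disj T
    refine le_trans (le_of_eq ?_) h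
    exact Finset.sum_congr rfl fun t _ => by rw [hwB]
  -- the Mazur-type recursion
  set δseq : ℕ → ℝ := fun k => (1/2 : ℝ)^(k+2) with hδseqdef
  have hδseqpos : ∀ k, 0 < δseq k := fun k => by positivity
  set P : ℕ → (ℕ → ℕ) → Prop := fun k v =>
    (∀ i j, i < j → j < k → v i < v j) ∧
    (∀ j, j < k → ∀ (a : ℕ → ℝ) (r : ℝ),
       ‖∑ i ∈ Finset.range j, a i • w (v i)‖ ≤
         (1 + δseq j) * ‖(∑ i ∈ Finset.range j, a i • w (v i)) + r • w (v j)‖) with hPdef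
  have hstep : ∀ k (v : ℕ → ℕ), P k v →
      ∃ m, (∀ i, i < k → v i < m) ∧ P (k+1) (Function.update v k m) := by
    intro k v hPv
    set E := Submodule.span ℝ ((fun i => w (v i)) '' Set.Iio k) with hEdef
    have hEfd : FiniteDimensional ℝ E :=
      FiniteDimensional.span_of_finite ℝ ((Set.finite_Iio k).image _)
    obtain ⟨t, hKt, hMaz⟩ := aux_step M₀ ε hε w hwnorm hwfun E hEfd (δseq k) (hδseqpos k)
      ((Finset.range k).sup v + 1)
    have hvt : ∀ i, i < k → v i < t := by
      intro i hi
      have hle : v i ≤ (Finset.range k).sup v := Finset.le_sup (Finset.mem_range.2 hi)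
      exact Nat.lt_of_lt_of_le (Nat.lt_succ_of_le hle) hKt
    refine ⟨t, hvt, ?_, ?_⟩
    · intro i j hij hjk
      rcases Nat.lt_succ_iff_lt_or_eq.1 hjk with hj | hj
      · rw [Function.update_of_ne (by omega) _ _, Function.update_of_ne (by omega) _ _]
        exact hPv.1 i j hij hj
      · subst hj
        rw [Function.update_of_ne (by omega) _ _, Function.update_self]
        exact hvt i hij
    · intro j hjk a r
      rcases Nat.lt_succ_iff_lt_or_eq.1 hjk with hj | hj
      · have hsums : ∀ i, i < j → Function.update v k t i = v i := by
          intro i hi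
          exact Function.update_of_ne (by omega) _ _
        have heq : ∑ i ∈ Finset.range j, a i • w (Function.update v k t i)
            = ∑ i ∈ Finset.range j, a i • w (v i) := by
          refine Finset.sum_congr rfl fun i hi => ?_
          rw [hsums i (Finset.mem_range.1 hi)]
        rw [heq, Function.update_of_ne (by omega) _ _]
        exact hPv.2 j hj a r
      · subst hj
        have heq : ∑ i ∈ Finset.range j, a i • w (Function.update v j t i)
            = ∑ i ∈ Finset.range j, a i • w (v i) := by
          refine Finset.sum_congr rfl fun i hi => ?_
          have hij := Finset.mem_range.1 hi
          rw [Function.update_of_ne (by omega) _ _]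
        rw [heq, Function.update_self]
        refine hMaz _ ?_ r
        refine Submodule.sum_mem _ fun i hi => Submodule.smul_mem _ _ ?_
        exact Submodule.subset_span ⟨i, Finset.mem_range.1 hi, rfl⟩
  set chain : (k : ℕ) → {v : ℕ → ℕ // P k v} :=
    fun k => Nat.rec
      ⟨fun _ => 0, by
        constructor
        · intro i j _ h; exact absurd h (Nat.not_lt_zero _)
        · intro j h; exact absurd h (Nat.not_lt_zero _)⟩
      (fun k pr => ⟨Function.update pr.1 k (Classical.choose (hstep k pr.1 pr.2)),
        (Classical.choose_spec (hstep k pr.1 pr.2)).2⟩) k with hchaindef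
  set τ : ℕ → ℕ := fun k => (chain (k+1)).1 k with hτdef
  have hagree : ∀ k i, i < k → (chain k).1 i = τ i := by
    intro k
    induction k with
    | zero => omega
    | succ k ih =>
      intro i hi
      rcases Nat.lt_succ_iff_lt_or_eq.1 hi with hik | hik
      · have h1 : (chain (k+1)).1 i = (chain k).1 i :=
          Function.update_of_ne (by omega) _ _
        rw [h1, ih i hik]
      · subst hik; rfl
  have hτmono : StrictMono τ := by
    intro i j hij
    have h1 := (chain (j+1)).2.1 i j hij (by omega)
    rwa [hagree (j+1) i (by omega), hagree (j+1) j (by omega)] at h1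
  set u : ℕ → X := fun k => w (τ k) with hudef
  have hMaz' : ∀ j (a : ℕ → ℝ) (r : ℝ),
      ‖∑ i ∈ Finset.range j, a i • u i‖ ≤
        (1 + δseq j) * ‖(∑ i ∈ Finset.range j, a i • u i) + r • u j‖ := by
    intro j a r
    have h1 := (chain (j+1)).2.2 j (by omega) a r
    have heq : ∑ i ∈ Finset.range j, a i • w ((chain (j+1)).1 i)
        = ∑ i ∈ Finset.range j, a i • u i := by
      refine Finset.sum_congr rfl fun i hi => ?_
      have hij := Finset.mem_range.1 hi
      rw [hagree (j+1) i (by omega)]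
    rw [heq, hagree (j+1) j (by omega)] at h1
    exact h1
  set B : ℕ → Finset ℕ := fun k => B₀ (τ k) with hBdef
  have hBdisj : ∀ k k', k ≠ k' → Disjoint (B k) (B k') :=
    fun k k' hne => hB₀disj _ _ (fun h => hne (hτmono.injective h))
  have huB : ∀ k, u k = ∑ i ∈ B k, x i := fun k => hwB (τ k)
  have hεu : ∀ k, ε ≤ ‖u k‖ := fun k => hwnorm (τ k)
  have hupper : ∀ (T : Finset ℕ) (a : ℕ → ℝ) (c : ℝ), 0 ≤ c → (∀ k ∈ T, |a k| ≤ c) →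
      ‖∑ k ∈ T, a k • u k‖ ≤ 2 * M₀ * c := by
    intro T a c hc ha
    have h := aux_smul_sum_le x M₀ hM B hBdisj T a c hc ha
    refine le_trans (le_of_eq ?_) h
    refine congrArg _ (Finset.sum_congr rfl fun k _ => ?_)
    rw [huB]
  -- the product bound
  have hprod : ∀ m, ∏ i ∈ Finset.range m, (1 + δseq i) ≤ 2 - (1/2:ℝ)^m := by
    intro m
    induction m with
    | zero => norm_num
    | succ m ih =>
      rw [Finset.prod_range_succ]
      have hq : (0:ℝ) < (1/2:ℝ)^m := by positivity
      have hδ : δseq m = (1/2:ℝ)^m / 4 := by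
        rw [hδseqdef]; ring_nf
      have hfac : (0:ℝ) < 1 + δseq m := by have := hδseqpos m; linarith
      have h1 : (∏ i ∈ Finset.range m, (1 + δseq i)) * (1 + δseq m)
          ≤ (2 - (1/2:ℝ)^m) * (1 + δseq m) := mul_le_mul_of_nonneg_right ih hfac.le
      have h2 : (2 - (1/2:ℝ)^m) * (1 + δseq m) ≤ 2 - (1/2:ℝ)^(m+1) := by
        rw [hδ, pow_succ]
        nlinarith [hq]
      linarith
  have hfactor1 : ∀ i, (1:ℝ) ≤ 1 + δseq i := fun i => by have := hδseqpos i; linarith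
  -- chain inequality
  have hchainineq : ∀ (a : ℕ → ℝ) k m, k ≤ m →
      ‖∑ i ∈ Finset.range k, a i • u i‖ ≤
        (∏ i ∈ Finset.Ico k m, (1 + δseq i)) * ‖∑ i ∈ Finset.range m, a i • u i‖ := by
    intro a k m hkm
    induction m, hkm using Nat.le_induction with
    | base => simp
    | succ m hkm ih =>
      have h1 : ‖∑ i ∈ Finset.range m, a i • u i‖ ≤
          (1 + δseq m) * ‖∑ i ∈ Finset.range (m+1), a i • u i‖ := by
        rw [Finset.sum_range_succ]
        exact hMaz' m a (a m)
      have hprodpos : (0:ℝ) ≤ ∏ i ∈ Finset.Ico k m, (1 + δseq i) :=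
        Finset.prod_nonneg fun i _ => by have := hδseqpos i; linarith
      calc ‖∑ i ∈ Finset.range k, a i • u i‖
          ≤ (∏ i ∈ Finset.Ico k m, (1 + δseq i)) * ‖∑ i ∈ Finset.range m, a i • u i‖ := ih
      _ ≤ (∏ i ∈ Finset.Ico k m, (1 + δseq i)) *
            ((1 + δseq m) * ‖∑ i ∈ Finset.range (m+1), a i • u i‖) :=
          mul_le_mul_of_nonneg_left h1 hprodpos
      _ = (∏ i ∈ Finset.Ico k (m+1), (1 + δseq i)) * ‖∑ i ∈ Finset.range (m+1), a i • u i‖ := by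
          rw [Finset.prod_Ico_succ_top hkm]; ring
  have hchain2 : ∀ (a : ℕ → ℝ) k m, k ≤ m →
      ‖∑ i ∈ Finset.range k, a i • u i‖ ≤ 2 * ‖∑ i ∈ Finset.range m, a i • u i‖ := by
    intro a k m hkm
    have h1 := hchainineq a k m hkm
    have h2 : (∏ i ∈ Finset.Ico k m, (1 + δseq i)) ≤ ∏ i ∈ Finset.range m, (1 + δseq i) := by
      have hsub : Finset.Ico k m ⊆ Finset.range m := by
        intro i hi
        rw [Finset.mem_Ico] at hi
        exact Finset.mem_range.2 hi.2
      have hsd := Finset.prod_sdiff (f := fun i => 1 + δseq i) hsub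
      have h1le : (1:ℝ) ≤ ∏ i ∈ Finset.range m \ Finset.Ico k m, (1 + δseq i) := by
        have := Finset.prod_le_prod (s := Finset.range m \ Finset.Ico k m)
          (f := fun _ => (1:ℝ)) (g := fun i => 1 + δseq i)
          (by intros; norm_num) (fun i _ => hfactor1 i)
        simpa using this
      have hpos : (0:ℝ) ≤ ∏ i ∈ Finset.Ico k m, (1 + δseq i) :=
        Finset.prod_nonneg fun i _ => by have := hδseqpos i; linarith
      calc ∏ i ∈ Finset.Ico k m, (1 + δseq i)
          ≤ (∏ i ∈ Finset.range m \ Finset.Ico k m, (1 + δseq i)) *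
              ∏ i ∈ Finset.Ico k m, (1 + δseq i) := le_mul_of_one_le_left hpos h1le
      _ = ∏ i ∈ Finset.range m, (1 + δseq i) := hsd
    have h3 : (∏ i ∈ Finset.range m, (1 + δseq i)) ≤ 2 := by
      have := hprod m
      have : (0:ℝ) < (1/2:ℝ)^m := by positivity
      linarith [hprod m]
    have h4 : (∏ i ∈ Finset.Ico k m, (1 + δseq i)) * ‖∑ i ∈ Finset.range m, a i • u i‖
        ≤ 2 * ‖∑ i ∈ Finset.range m, a i • u i‖ :=
      mul_le_mul_of_nonneg_right (le_trans h2 h3) (norm_nonneg _)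
    linarith
  have hlow : ∀ (a : ℕ → ℝ) m j, j < m →
      ε * |a j| ≤ 4 * ‖∑ i ∈ Finset.range m, a i • u i‖ := by
    intro a m j hjm
    have h1 : ε * |a j| ≤ ‖a j • u j‖ := by
      rw [norm_smul, Real.norm_eq_abs]
      calc ε * |a j| = |a j| * ε := mul_comm _ _
      _ ≤ |a j| * ‖u j‖ := mul_le_mul_of_nonneg_left (hεu j) (abs_nonneg _)
    have h2 : a j • u j = (∑ i ∈ Finset.range (j+1), a i • u i) - ∑ i ∈ Finset.range j, a i • u i := by
      rw [Finset.sum_range_succ]; abel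
    have h3 : ‖a j • u j‖ ≤ 2 * ‖∑ i ∈ Finset.range m, a i • u i‖
        + 2 * ‖∑ i ∈ Finset.range m, a i • u i‖ := by
      rw [h2]
      calc ‖(∑ i ∈ Finset.range (j+1), a i • u i) - ∑ i ∈ Finset.range j, a i • u i‖
          ≤ ‖∑ i ∈ Finset.range (j+1), a i • u i‖ + ‖∑ i ∈ Finset.range j, a i • u i‖ :=
            norm_sub_le _ _
      _ ≤ 2 * ‖∑ i ∈ Finset.range m, a i • u i‖ + 2 * ‖∑ i ∈ Finset.range m, a i • u i‖ :=
            add_le_add (hchain2 a (j+1) m (by omega)) (hchain2 a j m (by omega))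
    linarith
  -- summability
  have hsum : ∀ v : ZeroAtInftyContinuousMap ℕ ℝ, Summable (fun k => v k • u k) := by
    intro v
    rw [summable_iff_vanishing_norm]
    intro η hη
    have hv0 : Tendsto (⇑v) atTop (𝓝 (0:ℝ)) := by
      have h := zero_at_infty v
      rwa [cocompact_eq_cofinite, Nat.cofinite_eq_atTop] at h
    set η' : ℝ := η / (2*M₀+1) with hη'def
    have hη'pos : 0 < η' := by positivity
    obtain ⟨N, hN⟩ := Metric.tendsto_atTop.1 hv0 η' hη'pos
    refine ⟨Finset.range N, fun t ht => ?_⟩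
    have hb : ‖∑ k ∈ t, v k • u k‖ ≤ 2 * M₀ * η' := by
      refine hupper t (fun k => v k) η' hη'pos.le fun k hk => ?_
      have hkN : N ≤ k := by
        by_contra hcon
        exact (Finset.disjoint_left.1 ht hk) (Finset.mem_range.2 (by omega))
      have := hN k hkN
      rw [Real.dist_eq, sub_zero] at this
      exact this.le
    have h3 : (2*M₀+1) * η' = η := by
      rw [hη'def]
      field_simp
    have h2 : 2 * M₀ * η' < (2*M₀+1) * η' := by nlinarith [hη'pos]
    linarith
  -- the continuous linear embedding of c₀
  have hvnorm : ∀ (v : ZeroAtInftyContinuousMap ℕ ℝ) (k : ℕ), |v k| ≤ ‖v‖ := by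
    intro v k
    have h := BoundedContinuousFunction.norm_coe_le_norm v.toBCF k
    rwa [ZeroAtInftyContinuousMap.norm_toBCF_eq_norm, Real.norm_eq_abs] at h
  set Tlin : ZeroAtInftyContinuousMap ℕ ℝ →ₗ[ℝ] X :=
    { toFun := fun v => ∑' k, v k • u k
      map_add' := by
        intro v v'
        show (∑' k, ((v + v') : ZeroAtInftyContinuousMap ℕ ℝ) k • u k)
            = (∑' k, v k • u k) + ∑' k, v' k • u k
        have h : ∀ k, ((v + v') : ZeroAtInftyContinuousMap ℕ ℝ) k • u k
            = v k • u k + v' k • u k := by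
          intro k
          rw [ZeroAtInftyContinuousMap.coe_add, Pi.add_apply, add_smul]
        rw [tsum_congr h]
        exact Summable.tsum_add (hsum v) (hsum v')
      map_smul' := by
        intro c v
        show (∑' k, ((c • v) : ZeroAtInftyContinuousMap ℕ ℝ) k • u k)
            = (RingHom.id ℝ) c • ∑' k, v k • u k
        have h : ∀ k, ((c • v) : ZeroAtInftyContinuousMap ℕ ℝ) k • u k
            = c • (v k • u k) := by
          intro k
          rw [ZeroAtInftyContinuousMap.coe_smul, Pi.smul_apply, smul_smul, smul_eq_mul]
        rw [tsum_congr h]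
        simp only [RingHom.id_apply]
        exact Summable.tsum_const_smul c (hsum v) } with hTlindef
  have hTbound : ∀ v, ‖Tlin v‖ ≤ 2 * M₀ * ‖v‖ := by
    intro v
    have hn : Tendsto (fun s : Finset ℕ => ‖∑ k ∈ s, v k • u k‖) atTop (𝓝 ‖Tlin v‖) :=
      (hsum v).hasSum.norm
    refine le_of_tendsto hn (Filter.Eventually.of_forall fun s => ?_)
    exact hupper s (fun k => v k) ‖v‖ (norm_nonneg v) fun k _ => hvnorm v k
  set T : ZeroAtInftyContinuousMap ℕ ℝ →L[ℝ] X := Tlin.mkContinuous (2*M₀) hTbound with hTdef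
  have hTapp : ∀ v, T v = Tlin v := fun v => rfl
  have hTlow : ∀ v, ε/4 * ‖v‖ ≤ ‖T v‖ := by
    intro v
    have hjb : ∀ j, ε * |v j| ≤ 4 * ‖T v‖ := by
      intro j
      have hn : Tendsto (fun s : Finset ℕ => 4 * ‖∑ k ∈ s, v k • u k‖) atTop (𝓝 (4 * ‖T v‖)) := by
        rw [hTapp]
        exact ((hsum v).hasSum.norm).const_mul 4
      refine ge_of_tendsto hn ?_
      filter_upwards [Filter.eventually_ge_atTop ({j} : Finset ℕ)] with s hs
      have hjs : j ∈ s := hs (Finset.mem_singleton_self j)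
      set a : ℕ → ℝ := fun k => if k ∈ s then v k else 0 with hadef
      set m : ℕ := s.sup id + 1 with hmdef
      have hsub : s ⊆ Finset.range m := by
        intro i hi
        have : i ≤ s.sup id := Finset.le_sup (f := id) hi
        rw [Finset.mem_range]; omega
      have hsum_eq : ∑ k ∈ s, v k • u k = ∑ i ∈ Finset.range m, a i • u i := by
        rw [← Finset.sum_subset hsub (fun i _ his => by rw [hadef]; simp [his])]
        exact Finset.sum_congr rfl fun i hi => by rw [hadef]; simp [hi]
      have hjm : j < m := Finset.mem_range.1 (hsub hjs)
      have h := hlow a m j hjm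
      rw [← hsum_eq] at h
      have haj : a j = v j := by rw [hadef]; simp [hjs]
      rwa [haj] at h
    have hnv : ‖v‖ ≤ 4/ε * ‖T v‖ := by
      rw [← ZeroAtInftyContinuousMap.norm_toBCF_eq_norm]
      refine (BoundedContinuousFunction.norm_le (by positivity)).2 fun j => ?_
      have h1 : |v j| ≤ 4 * ‖T v‖ / ε := (le_div_iff₀ hε).2 (by linarith [hjb j, mul_comm (ε) (|v j|)])
      calc ‖v.toBCF j‖ = |v j| := Real.norm_eq_abs _
      _ ≤ 4 * ‖T v‖ / ε := h1
      _ = 4/ε * ‖T v‖ := by ring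
    calc ε/4 * ‖v‖ ≤ ε/4 * (4/ε * ‖T v‖) :=
        mul_le_mul_of_nonneg_left hnv (by positivity)
    _ = ‖T v‖ := by field_simp
  exact ⟨T, ε/4, by positivity, hTlow⟩


lemma aux_cylinder {Q : (ℕ → ℕ) → Prop} {A : Set {f : ℕ → ℕ // Q f}} {s : {f : ℕ → ℕ // Q f}}
    (h : A ∈ 𝓝 s) : ∃ k : ℕ, ∀ t : {f : ℕ → ℕ // Q f}, (∀ i < k, t.1 i = s.1 i) → t ∈ A := by
  rw [nhds_subtype_eq_comap, Filter.mem_comap] at h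
  obtain ⟨V, hV, hVA⟩ := h
  rw [nhds_pi, Filter.mem_pi] at hV
  obtain ⟨I, hIfin, W, hW, hsub⟩ := hV
  obtain ⟨b, hb⟩ := hIfin.bddAbove
  refine ⟨b + 1, fun t ht => ?_⟩
  apply hVA
  show t.1 ∈ V
  apply hsub
  intro i hi
  have hib : i ≤ b := hb hi
  rw [ht i (by omega)]
  have := hW i
  rwa [nhds_discrete, Filter.mem_pure] at this

lemma aux_closed {Q : (ℕ → ℕ) → Prop} (x : ℕ → X) (M : ℝ) :
    IsClosed {f : {g : ℕ → ℕ // Q g} | ∀ n, ‖∑ i ∈ Finset.range n, x (f.1 i)‖ ≤ M} := by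
  have heq : {f : {g : ℕ → ℕ // Q g} | ∀ n, ‖∑ i ∈ Finset.range n, x (f.1 i)‖ ≤ M}
      = ⋂ n, {f : {g : ℕ → ℕ // Q g} | ‖∑ i ∈ Finset.range n, x (f.1 i)‖ ≤ M} := by
    ext f; simp [Set.mem_iInter]
  rw [heq]
  refine isClosed_iInter fun n => ?_
  have hcont : Continuous fun f : {g : ℕ → ℕ // Q g} => ‖∑ i ∈ Finset.range n, x (f.1 i)‖ := by
    refine Continuous.norm ?_
    refine continuous_finset_sum _ fun i _ => ?_
    have h1 : Continuous fun f : {g : ℕ → ℕ // Q g} => f.1 i :=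
      (continuous_apply i).comp continuous_subtype_val
    exact (continuous_of_discreteTopology (f := x)).comp h1
  exact isClosed_le hcont continuous_const

lemma aux_meagre_of {Y : Type*} [TopologicalSpace Y] (A : ℕ → Set Y)
    (hA : ∀ M, IsClosed (A M)) (hint : ∀ M, interior (A M) = ∅)
    (E : Set Y) (hE : E ⊆ ⋃ M, A M) : IsMeagre E := by
  refine IsMeagre.mono hE ?_
  refine isMeagre_iUnion fun M => ?_
  rw [isMeagre_iff_countable_union_isNowhereDense]
  refine ⟨{A M}, ?_, Set.countable_singleton _, by simp⟩
  intro t ht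
  rw [Set.mem_singleton_iff] at ht
  subst ht
  rw [(hA M).isNowhereDense_iff]
  exact hint M


lemma aux_S_int (x : ℕ → X)
    (KL : ∀ (M : ℝ) (N : ℕ), ∃ G : Finset ℕ, (∀ i ∈ G, N ≤ i) ∧ M < ‖∑ i ∈ G, x i‖)
    (M : ℕ) :
    interior {s : IncSeq | ∀ n, ‖∑ i ∈ Finset.range n, x (s.1 i)‖ ≤ (M:ℝ)} = ∅ := by
  rw [Set.eq_empty_iff_forall_notMem]
  intro s hs
  rw [mem_interior_iff_mem_nhds] at hs
  obtain ⟨k, hk⟩ := aux_cylinder hs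
  obtain ⟨G, hGN, hGnorm⟩ := KL (2*(M:ℝ)+1) (s.1 k)
  have hM0 : (0:ℝ) ≤ (M:ℝ) := Nat.cast_nonneg M
  have hGne : G.Nonempty := by
    rcases G.eq_empty_or_nonempty with h | h
    · exfalso; rw [h] at hGnorm; simp at hGnorm; linarith
    · exact h
  set l : ℕ := G.card with hldef
  have hl : 0 < l := Finset.card_pos.2 hGne
  set e : Fin l ≃o {g // g ∈ G} := G.orderIsoOfFin rfl with hedef
  set Bmax : ℕ := G.max' hGne with hBmaxdef
  have hGmem : ∀ j : Fin l, (e j : ℕ) ∈ G := fun j => (e j).2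
  have hGge : ∀ j : Fin l, s.1 k ≤ (e j : ℕ) := fun j => hGN _ (hGmem j)
  have hGle : ∀ j : Fin l, (e j : ℕ) ≤ Bmax := fun j => G.le_max' _ (hGmem j)
  have hemono : ∀ j j' : Fin l, j < j' → (e j : ℕ) < (e j' : ℕ) := by
    intro j j' hjj
    exact Subtype.coe_lt_coe.2 (e.lt_iff_lt.2 hjj)
  set s' : ℕ → ℕ := fun i =>
    if i < k then s.1 i else if h : i - k < l then (e ⟨i - k, h⟩ : ℕ) else Bmax + 1 + (i - k - l)
    with hs'def
  have hs'low : ∀ i, i < k → s' i = s.1 i := by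
    intro i hi; simp only [hs'def, if_pos hi]
  have hs'mid : ∀ j : Fin l, s' (k + (j : ℕ)) = (e j : ℕ) := by
    intro j
    have h1 : ¬ (k + (j:ℕ) < k) := by omega
    have h2 : k + (j:ℕ) - k = (j:ℕ) := by omega
    simp only [hs'def, if_neg h1, h2, dif_pos j.isLt, Fin.eta]
  have hs'tail : ∀ i, k ≤ i → l ≤ i - k → s' i = Bmax + 1 + (i - k - l) := by
    intro i h1 h2
    simp only [hs'def, if_neg (by omega : ¬ i < k), dif_neg (by omega : ¬ i - k < l)]
  have hmono : StrictMono s' := by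
    apply strictMono_nat_of_lt_succ
    intro i
    by_cases h1 : i + 1 < k
    · rw [hs'low i (by omega), hs'low (i+1) h1]
      exact s.2 (by omega)
    · by_cases h2 : i < k
      · have hik : i + 1 = k := by omega
        rw [hs'low i h2]
        have h3 : s' (i + 1) = (e ⟨0, hl⟩ : ℕ) := by
          have := hs'mid ⟨0, hl⟩
          simpa [hik] using this
        rw [h3]
        calc s.1 i < s.1 k := s.2 (by omega)
        _ ≤ (e ⟨0, hl⟩ : ℕ) := hGge _
      · by_cases h3 : i + 1 - k < l
        · have h4 : i - k < l := by omega
          have e1 : s' i = (e ⟨i - k, h4⟩ : ℕ) := by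
            have := hs'mid ⟨i - k, h4⟩
            rw [show k + (i - k) = i by omega] at this
            exact this
          have e2 : s' (i + 1) = (e ⟨i + 1 - k, h3⟩ : ℕ) := by
            have := hs'mid ⟨i + 1 - k, h3⟩
            rw [show k + (i + 1 - k) = i + 1 by omega] at this
            exact this
          rw [e1, e2]
          exact hemono _ _ (by simp [Fin.lt_def]; omega)
        · by_cases h4 : i - k < l
          · have e1 : s' i = (e ⟨i - k, h4⟩ : ℕ) := by
              have := hs'mid ⟨i - k, h4⟩
              rw [show k + (i - k) = i by omega] at this
              exact this
            have e2 : s' (i + 1) = Bmax + 1 + (i + 1 - k - l) := hs'tail _ (by omega) (by omega)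
            rw [e1, e2]
            have := hGle ⟨i - k, h4⟩
            omega
          · rw [hs'tail i (by omega) (by omega), hs'tail (i+1) (by omega) (by omega)]
            omega
  set s'' : IncSeq := ⟨s', hmono⟩ with hs''def
  have hmem : s'' ∈ {s : IncSeq | ∀ n, ‖∑ i ∈ Finset.range n, x (s.1 i)‖ ≤ (M:ℝ)} :=
    hk s'' (fun i hi => hs'low i hi)
  have hP1 : ‖∑ i ∈ Finset.range k, x (s' i)‖ ≤ (M:ℝ) := hmem k
  have hP2 : ‖∑ i ∈ Finset.range (k+l), x (s' i)‖ ≤ (M:ℝ) := hmem (k+l)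
  have hdiff : ∑ i ∈ Finset.range (k+l), x (s' i) - ∑ i ∈ Finset.range k, x (s' i)
      = ∑ g ∈ G, x g := by
    rw [← Finset.sum_Ico_eq_sub _ (by omega : k ≤ k + l)]
    rw [Finset.sum_Ico_eq_sum_range]
    rw [show k + l - k = l by omega]
    have h1 : ∑ i ∈ Finset.range l, x (s' (k + i)) = ∑ j : Fin l, x (s' (k + (j:ℕ))) :=
      (Fin.sum_univ_eq_sum_range (fun i => x (s' (k + i))) l).symm
    rw [h1]
    have h2 : ∑ j : Fin l, x (s' (k + (j:ℕ))) = ∑ j : Fin l, x ((e j : ℕ)) :=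
      Fintype.sum_congr _ _ fun j => by rw [hs'mid j]
    rw [h2]
    have h3 : ∑ j : Fin l, x ((e j : ℕ)) = ∑ g : {g // g ∈ G}, x (g : ℕ) :=
      Equiv.sum_comp e.toEquiv (fun g : {g // g ∈ G} => x (g : ℕ))
    rw [h3]
    exact Finset.sum_coe_sort G x
  have hcontr : ‖∑ g ∈ G, x g‖ ≤ 2*(M:ℝ) := by
    rw [← hdiff]
    calc ‖_ - _‖ ≤ ‖∑ i ∈ Finset.range (k+l), x (s' i)‖ + ‖∑ i ∈ Finset.range k, x (s' i)‖ :=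
      norm_sub_le _ _
    _ ≤ 2*(M:ℝ) := by linarith
  linarith


lemma aux_P_int (x : ℕ → X)
    (KL : ∀ (M : ℝ) (N : ℕ), ∃ G : Finset ℕ, (∀ i ∈ G, N ≤ i) ∧ M < ‖∑ i ∈ G, x i‖)
    (M : ℕ) :
    interior {q : BijSeq | ∀ n, ‖∑ i ∈ Finset.range n, x (q.1 i)‖ ≤ (M:ℝ)} = ∅ := by
  classical
  rw [Set.eq_empty_iff_forall_notMem]
  intro q hq
  rw [mem_interior_iff_mem_nhds] at hq
  obtain ⟨k, hk⟩ := aux_cylinder hq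
  set pe : ℕ ≃ ℕ := Equiv.ofBijective q.1 q.2 with hpedef
  have hpeapp : ∀ i, pe i = q.1 i := fun i => rfl
  set N : ℕ := (Finset.range k).sup q.1 + 1 with hNdef
  have hNlt : ∀ i, i < k → q.1 i < N := by
    intro i hi
    have : q.1 i ≤ (Finset.range k).sup q.1 := Finset.le_sup (Finset.mem_range.2 hi)
    omega
  obtain ⟨G, hGN, hGnorm⟩ := KL (2*(M:ℝ)+1) N
  have hM0 : (0:ℝ) ≤ (M:ℝ) := Nat.cast_nonneg M
  have hGne : G.Nonempty := by
    rcases G.eq_empty_or_nonempty with h | h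
    · exfalso; rw [h] at hGnorm; simp at hGnorm; linarith
    · exact h
  set l : ℕ := G.card with hldef
  set D : Finset ℕ := G.image (fun g => pe.symm g) with hDdef
  have hDcard : D.card = l := Finset.card_image_of_injective _ pe.symm.injective
  have hDk : ∀ d ∈ D, k ≤ d := by
    intro d hd
    rw [hDdef, Finset.mem_image] at hd
    obtain ⟨g, hg, rfl⟩ := hd
    by_contra hcon
    push_neg at hcon
    have h1 : q.1 (pe.symm g) = g := by
      rw [← hpeapp]; exact pe.apply_symm_apply g
    have h2 := hNlt _ hcon
    rw [h1] at h2
    have := hGN g hg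
    omega
  set A : Finset ℕ := Finset.Ico k (k+l) with hAdef
  have hAcard : A.card = l := by rw [hAdef, Nat.card_Ico]; omega
  have hcards : (A \ D).card = (D \ A).card :=
    Finset.card_sdiff_comm (by rw [hAcard, hDcard])
  set eAD : {a // a ∈ A \ D} ≃ {a // a ∈ D \ A} :=
    Fintype.equivOfCardEq (by rw [Fintype.card_coe, Fintype.card_coe, hcards]) with heADdef
  set σf : ℕ → ℕ := fun y =>
    if h : y ∈ A \ D then (eAD ⟨y, h⟩ : ℕ)
    else if h : y ∈ D \ A then (eAD.symm ⟨y, h⟩ : ℕ) else y with hσfdef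
  have hval1 : ∀ y (h : y ∈ A \ D), σf y = (eAD ⟨y, h⟩ : ℕ) := by
    intro y h; simp only [hσfdef, dif_pos h]
  have hval2 : ∀ y (h : y ∈ D \ A), σf y = (eAD.symm ⟨y, h⟩ : ℕ) := by
    intro y h
    have h' : ¬ y ∈ A \ D := by
      rw [Finset.mem_sdiff] at h ⊢
      tauto
    simp only [hσfdef, dif_neg h', dif_pos h]
  have hval3 : ∀ y, ¬ y ∈ A \ D → ¬ y ∈ D \ A → σf y = y := by
    intro y h1 h2; simp only [hσfdef, dif_neg h1, dif_neg h2]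
  have hinv : Function.Involutive σf := by
    intro y
    by_cases h1 : y ∈ A \ D
    · rw [hval1 y h1]
      have hz : ((eAD ⟨y, h1⟩ : {a // a ∈ D \ A}) : ℕ) ∈ D \ A := (eAD ⟨y, h1⟩).2
      rw [hval2 _ hz]
      have : (⟨((eAD ⟨y, h1⟩ : {a // a ∈ D \ A}) : ℕ), hz⟩ : {a // a ∈ D \ A})
          = eAD ⟨y, h1⟩ := Subtype.ext rfl
      rw [this, Equiv.symm_apply_apply]
    · by_cases h2 : y ∈ D \ A
      · rw [hval2 y h2]
        have hz : ((eAD.symm ⟨y, h2⟩ : {a // a ∈ A \ D}) : ℕ) ∈ A \ D := (eAD.symm ⟨y, h2⟩).2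
        rw [hval1 _ hz]
        have : (⟨((eAD.symm ⟨y, h2⟩ : {a // a ∈ A \ D}) : ℕ), hz⟩ : {a // a ∈ A \ D})
            = eAD.symm ⟨y, h2⟩ := Subtype.ext rfl
        rw [this, Equiv.apply_symm_apply]
      · rw [hval3 y h1 h2, hval3 y h1 h2]
  set σ : Equiv.Perm ℕ := ⟨σf, σf, hinv.leftInverse, hinv.rightInverse⟩ with hσdef
  have hσA : ∀ a ∈ A, σf a ∈ D := by
    intro a ha
    by_cases h1 : a ∈ A \ D
    · rw [hval1 a h1]
      exact (Finset.mem_sdiff.1 (eAD ⟨a, h1⟩).2).1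
    · have haD : a ∈ D := by
        rw [Finset.mem_sdiff] at h1
        tauto
      have h2 : ¬ a ∈ D \ A := by
        rw [Finset.mem_sdiff]
        tauto
      rw [hval3 a h1 h2]
      exact haD
  have himgAD : A.image σf = D := by
    refine Finset.eq_of_subset_of_card_le ?_ ?_
    · intro b hb
      rw [Finset.mem_image] at hb
      obtain ⟨a, ha, rfl⟩ := hb
      exact hσA a ha
    · rw [Finset.card_image_of_injective _ hinv.injective, hAcard, hDcard]
  have hσfix : ∀ i, i < k → σf i = i := by
    intro i hi
    have h1 : ¬ i ∈ A \ D := by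
      rw [Finset.mem_sdiff, hAdef, Finset.mem_Ico]
      omega
    have h2 : ¬ i ∈ D \ A := by
      rw [Finset.mem_sdiff]
      rintro ⟨hiD, -⟩
      have := hDk i hiD
      omega
    exact hval3 i h1 h2
  set q' : ℕ → ℕ := fun i => q.1 (σf i) with hq'def
  have hq'bij : Function.Bijective q' := by
    have : q' = ⇑(σ.trans pe) := rfl
    rw [this]
    exact (σ.trans pe).bijective
  set q'' : BijSeq := ⟨q', hq'bij⟩ with hq''def
  have hmem : q'' ∈ {r : BijSeq | ∀ n, ‖∑ i ∈ Finset.range n, x (r.1 i)‖ ≤ (M:ℝ)} := by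
    refine hk q'' fun i hi => ?_
    show q.1 (σf i) = q.1 i
    rw [hσfix i hi]
  have hP1 : ‖∑ i ∈ Finset.range k, x (q' i)‖ ≤ (M:ℝ) := hmem k
  have hP2 : ‖∑ i ∈ Finset.range (k+l), x (q' i)‖ ≤ (M:ℝ) := hmem (k+l)
  have hdiff : ∑ i ∈ Finset.range (k+l), x (q' i) - ∑ i ∈ Finset.range k, x (q' i)
      = ∑ g ∈ G, x g := by
    rw [← Finset.sum_Ico_eq_sub _ (by omega : k ≤ k + l)]
    have h1 : ∑ i ∈ Finset.Ico k (k+l), x (q' i) = ∑ a ∈ A, x (q.1 (σf a)) := by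
      rw [hAdef]
    have h2 : ∑ j ∈ A.image σf, x (q.1 j) = ∑ a ∈ A, x (q.1 (σf a)) :=
      Finset.sum_image (fun a _ b _ h => hinv.injective h)
    have h3 : ∑ j ∈ D, x (q.1 j) = ∑ g ∈ G, x (q.1 (pe.symm g)) := by
      rw [hDdef]
      exact Finset.sum_image (fun a _ b _ h => pe.symm.injective h)
    have h4 : ∀ g, q.1 (pe.symm g) = g := by
      intro g
      rw [← hpeapp]; exact pe.apply_symm_apply g
    rw [h1, ← h2, himgAD, h3]
    exact Finset.sum_congr rfl fun g _ => by rw [h4]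
  have hcontr : ‖∑ g ∈ G, x g‖ ≤ 2*(M:ℝ) := by
    rw [← hdiff]
    calc ‖_ - _‖ ≤ ‖∑ i ∈ Finset.range (k+l), x (q' i)‖ + ‖∑ i ∈ Finset.range k, x (q' i)‖ :=
      norm_sub_le _ _
    _ ≤ 2*(M:ℝ) := by linarith
  linarith


end

end AuxiliaryLemmas

theorem E_and_F_meager_of_no_c0
    {X : Type*} [NormedAddCommGroup X] [NormedSpace ℝ X] [CompleteSpace X]
    (hX : ¬ ContainsCopyOfC0 X)
    (x : ℕ → X) (hx : ¬ UnconditionallyConvergent x) :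
    IsMeagre {s : IncSeq | ∃ M : ℝ, ∀ n : ℕ, ‖∑ i ∈ Finset.range n, x (s.1 i)‖ ≤ M} ∧
    IsMeagre {p : BijSeq | ∃ M : ℝ, ∀ n : ℕ, ‖∑ i ∈ Finset.range n, x (p.1 i)‖ ≤ M} := by
  classical
  have KL : ∀ (M : ℝ) (N : ℕ), ∃ G : Finset ℕ, (∀ i ∈ G, N ≤ i) ∧ M < ‖∑ i ∈ G, x i‖ := by
    intro M N
    by_contra hcon
    push_neg at hcon
    apply hX
    have hM₀ : ∀ G : Finset ℕ, ‖∑ i ∈ G, x i‖ ≤ M + ∑ i ∈ Finset.range N, ‖x i‖ := by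
      intro G
      have hsplit := Finset.sum_filter_add_sum_filter_not G (fun i => i < N) x
      calc ‖∑ i ∈ G, x i‖
          = ‖(∑ i ∈ G.filter (fun i => i < N), x i)
              + ∑ i ∈ G.filter (fun i => ¬ i < N), x i‖ := by rw [hsplit]
      _ ≤ ‖∑ i ∈ G.filter (fun i => i < N), x i‖
            + ‖∑ i ∈ G.filter (fun i => ¬ i < N), x i‖ := norm_add_le _ _
      _ ≤ (∑ i ∈ Finset.range N, ‖x i‖) + M := by
          refine add_le_add ?_ ?_
          · calc ‖∑ i ∈ G.filter (fun i => i < N), x i‖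
                ≤ ∑ i ∈ G.filter (fun i => i < N), ‖x i‖ := norm_sum_le _ _
            _ ≤ ∑ i ∈ Finset.range N, ‖x i‖ :=
                Finset.sum_le_sum_of_subset_of_nonneg
                  (fun i hi => by
                    rw [Finset.mem_filter] at hi
                    exact Finset.mem_range.2 hi.2)
                  (fun i _ _ => norm_nonneg _)
          · exact hcon _ (fun i hi => by rw [Finset.mem_filter] at hi; omega)
      _ = M + ∑ i ∈ Finset.range N, ‖x i‖ := by ring
    rw [UnconditionallyConvergent] at hx
    push_neg at hx
    obtain ⟨p, hp⟩ := hx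
    exact aux_contains_c0 x _ hM₀ p (fun ⟨L, hL⟩ => hp L hL)
  constructor
  · refine aux_meagre_of
      (fun M : ℕ => {s : IncSeq | ∀ n, ‖∑ i ∈ Finset.range n, x (s.1 i)‖ ≤ (M:ℝ)})
      (fun M => aux_closed (Q := StrictMono) x (M:ℝ))
      (fun M => aux_S_int x KL M) _ ?_
    intro s hs
    obtain ⟨M, hM⟩ := hs
    exact Set.mem_iUnion.2 ⟨⌈M⌉₊, fun n => le_trans (hM n) (Nat.le_ceil M)⟩
  · refine aux_meagre_of
      (fun M : ℕ => {q : BijSeq | ∀ n, ‖∑ i ∈ Finset.range n, x (q.1 i)‖ ≤ (M:ℝ)})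
      (fun M => aux_closed (Q := Function.Bijective) x (M:ℝ))
      (fun M => aux_P_int x KL M) _ ?_
    intro q hq
    obtain ⟨M, hM⟩ := hq
    exact Set.mem_iUnion.2 ⟨⌈M⌉₊, fun n => le_trans (hM n) (Nat.le_ceil M)⟩
end

section
/- Let X be a Banach space containing an isomorphic copy of c₀. Then there exists a series ∑ x_n in X which is not unconditionally convergent, but such that every subseries and every rearrangement of ∑ x_n has bounded partial sums (so E = S and F = P). -/
open Filter

/-- The `n`-th unit vector in `c₀`. -/
noncomputable def c0UnitVec (n : ℕ) : ZeroAtInftyContinuousMap ℕ ℝ :=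
  { toFun := fun m => if m = n then 1 else 0
    continuous_toFun := continuous_of_discreteTopology
    zero_at_infty' := by
      rw [Filter.cocompact_eq_cofinite]
      apply Filter.Tendsto.congr' (f₁ := fun _ => (0 : ℝ))
      · filter_upwards [Filter.eventually_cofinite_ne n] with m hm
        simp [hm]
      · exact tendsto_const_nhds }

lemma c0UnitVec_apply (n m : ℕ) : c0UnitVec n m = if m = n then 1 else 0 := rfl

lemma one_le_norm_c0UnitVec (n : ℕ) : (1 : ℝ) ≤ ‖c0UnitVec n‖ := by
  rw [← ZeroAtInftyContinuousMap.norm_toBCF_eq_norm]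
  have := BoundedContinuousFunction.norm_coe_le_norm (c0UnitVec n).toBCF n
  simpa [c0UnitVec_apply] using this

lemma norm_sum_c0UnitVec_le {s : ℕ → ℕ} (hs : Function.Injective s) (n : ℕ) :
    ‖∑ i ∈ Finset.range n, c0UnitVec (s i)‖ ≤ 1 := by
  rw [← ZeroAtInftyContinuousMap.norm_toBCF_eq_norm]
  apply BoundedContinuousFunction.norm_le (by norm_num) |>.2
  intro m
  have hcoe : ((∑ i ∈ Finset.range n, c0UnitVec (s i)).toBCF : ℕ → ℝ) m
      = ∑ i ∈ Finset.range n, c0UnitVec (s i) m := by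
    induction n with
    | zero => simp
    | succ k ih => simp only [Finset.sum_range_succ]; rw [← ih]; rfl
  rw [hcoe]
  simp only [c0UnitVec_apply]
  have heq : ∑ i ∈ Finset.range n, (if m = s i then (1 : ℝ) else 0)
      = ((Finset.range n).filter (fun i => m = s i)).card := by
    rw [Finset.sum_ite, Finset.sum_const, Finset.sum_const_zero]
    simp
  rw [heq]
  have hcard : ((Finset.range n).filter (fun i => m = s i)).card ≤ 1 := by
    apply Finset.card_le_one.2
    intro a ha b hb
    simp only [Finset.mem_filter] at ha hb
    exact hs (ha.2.symm.trans hb.2)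
  rw [Real.norm_eq_abs, abs_of_nonneg (by positivity)]
  exact_mod_cast hcard

theorem exists_bad_series_of_contains_c0
    {X : Type*} [NormedAddCommGroup X] [NormedSpace ℝ X] [CompleteSpace X]
    (hX : ContainsCopyOfC0 X) :
    ∃ x : ℕ → X, ¬ UnconditionallyConvergent x ∧
      (∀ s : ℕ → ℕ, StrictMono s →
        ∃ M : ℝ, ∀ n : ℕ, ‖∑ i ∈ Finset.range n, x (s i)‖ ≤ M) ∧
      (∀ p : ℕ → ℕ, Function.Bijective p →
        ∃ M : ℝ, ∀ n : ℕ, ‖∑ i ∈ Finset.range n, x (p i)‖ ≤ M) := by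
  obtain ⟨T, c, hc, hT⟩ := hX
  refine ⟨fun n => T (c0UnitVec n), ?_, ?_, ?_⟩
  · intro h
    obtain ⟨L, hL⟩ := h (Equiv.refl ℕ)
    have hterm : Tendsto (fun n => T (c0UnitVec n)) atTop (nhds 0) := by
      have h1 := hL.comp (tendsto_add_atTop_nat 1)
      have := h1.sub hL
      simp only [Function.comp, Finset.sum_range_succ] at this
      simpa using this
    have : Tendsto (fun n => ‖T (c0UnitVec n)‖) atTop (nhds 0) := by
      simpa using hterm.norm
    have hlb : ∀ n, c ≤ ‖T (c0UnitVec n)‖ := fun n =>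
      le_trans (by nlinarith [one_le_norm_c0UnitVec n]) (hT (c0UnitVec n))
    have := ge_of_tendsto this (Filter.Eventually.of_forall hlb)
    linarith
  all_goals {
    intro s hs
    refine ⟨‖T‖, fun n => ?_⟩
    have hinj : Function.Injective s := by
      first
      | exact hs.injective
      | exact hs.1
    calc ‖∑ i ∈ Finset.range n, T (c0UnitVec (s i))‖
        = ‖T (∑ i ∈ Finset.range n, c0UnitVec (s i))‖ := by rw [map_sum]
      _ ≤ ‖T‖ * ‖∑ i ∈ Finset.range n, c0UnitVec (s i)‖ := T.le_opNorm _
      _ ≤ ‖T‖ * 1 := by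
          have := norm_sum_c0UnitVec_le hinj n
          have h0 : 0 ≤ ‖T‖ := T.opNorm_nonneg
          nlinarith
      _ = ‖T‖ := mul_one _
  }
end

section
/- Let I be an ideal on ℕ with the Baire property. A Banach space X contains no isomorphic copy of c₀ if and only if for every series ∑ x_n in X which is not unconditionally convergent, the set A(I) = {t ∈ {0,1}^ℕ : (∑_{i=1}^n t(i) x_i)_n is I-bounded} is meager in the Cantor space {0,1}^ℕ. -/
open Filter

/-- An ideal `I` on `ℕ` has the Baire property if the corresponding set of
characteristic functions is Baire measurable in the Cantor space `ℕ → Bool`. -/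
def IdealHasBaireProperty (I : Set (Set ℕ)) : Prop :=
  BaireMeasurableSet {t : ℕ → Bool | {n : ℕ | t n = true} ∈ I}

section Aux
open Set Metric Topology
set_option maxHeartbeats 1000000
set_option synthInstance.maxHeartbeats 400000
set_option linter.unusedSectionVars false

def idealSet (I : Set (Set ℕ)) : Set (ℕ → Bool) := {t : ℕ → Bool | {n : ℕ | t n = true} ∈ I}


lemma isMeagre_of_isNowhereDense {Z : Type*} [TopologicalSpace Z] {s : Set Z}
    (h : IsNowhereDense s) : IsMeagre s := by
  rw [isMeagre_iff_countable_union_isNowhereDense]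
  exact ⟨{s}, by simpa using h, Set.countable_singleton s, by simp⟩

lemma exists_cyl_subset {U : Set (ℕ → Bool)} (hU : IsOpen U) {t₀ : ℕ → Bool} (ht₀ : t₀ ∈ U) :
    ∃ m, ∀ t : ℕ → Bool, (∀ i < m, t i = t₀ i) → t ∈ U := by
  rcases (isOpen_pi_iff.1 hU) t₀ ht₀ with ⟨u, V, hV, hsub⟩
  rcases u.bddAbove with ⟨m, hm⟩
  refine ⟨m + 1, fun t ht => hsub ?_⟩
  intro i hi
  have hi' : i < m + 1 := Nat.lt_succ_of_le (hm hi)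
  rw [ht i hi']
  exact (hV i hi).2

lemma nonmeager_closed_cyl {H : Set (ℕ → Bool)} (hcl : IsClosed H) (h : ¬ IsMeagre H) :
    ∃ (m : ℕ) (t₀ : ℕ → Bool), ∀ t : ℕ → Bool, (∀ i < m, t i = t₀ i) → t ∈ H := by
  have hint : (interior H).Nonempty := by
    by_contra hempty
    rw [Set.not_nonempty_iff_eq_empty] at hempty
    exact h (isMeagre_of_isNowhereDense (hcl.isNowhereDense_iff.2 hempty))
  rcases hint with ⟨t₀, ht₀⟩
  rcases exists_cyl_subset isOpen_interior ht₀ with ⟨m, hm⟩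
  exact ⟨m, t₀, fun t ht => interior_subset (hm t ht)⟩

lemma isMeagre_iUnion_countable {Z : Type*} [TopologicalSpace Z] {ι : Type*} [Countable ι]
    {s : ι → Set Z} (hs : ∀ i, IsMeagre (s i)) : IsMeagre (⋃ i, s i) := by
  rw [IsMeagre, Set.compl_iUnion]
  exact countable_iInter_mem.mpr hs

lemma isOpen_cyl (u : Finset ℕ) (σ : ℕ → Bool) :
    IsOpen {t : ℕ → Bool | ∀ i ∈ u, t i = σ i} := by
  have : {t : ℕ → Bool | ∀ i ∈ u, t i = σ i} = ⋂ i ∈ u, (fun t : ℕ → Bool => t i) ⁻¹' {σ i} := by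
    ext t; simp
  rw [this]
  exact isOpen_biInter_finset fun i _ => (continuous_apply i).isOpen_preimage _ (isOpen_discrete _)


section Flip

/-- flip map -/
def flipMap (g : ℕ → Bool) : (ℕ → Bool) → (ℕ → Bool) := fun t n => xor (g n) (t n)

lemma flipMap_invol (g : ℕ → Bool) : flipMap g ∘ flipMap g = id := by
  funext t n
  simp only [flipMap, Function.comp, id]
  cases g n <;> cases t n <;> rfl

lemma continuous_flipMap (g : ℕ → Bool) : Continuous (flipMap g) := by
  refine continuous_pi fun n => ?_
  exact (continuous_of_discreteTopology (f := fun b : Bool => xor (g n) b)).comp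
    (continuous_apply n)

lemma isOpenMap_flipMap (g : ℕ → Bool) : IsOpenMap (flipMap g) := by
  intro U hU
  have : flipMap g '' U = flipMap g ⁻¹' U := by
    ext t
    constructor
    · rintro ⟨s, hs, rfl⟩
      have h2 : flipMap g (flipMap g s) = s := congrFun (flipMap_invol g) s
      simpa [Set.mem_preimage, h2] using hs
    · intro ht
      exact ⟨flipMap g t, ht, by
        rw [← Function.comp_apply (f := flipMap g) (g := flipMap g), flipMap_invol]; rfl⟩
  rw [this]
  exact (continuous_flipMap g).isOpen_preimage _ hU

lemma isMeagre_preimage_flipMap {g : ℕ → Bool} {s : Set (ℕ → Bool)} (h : IsMeagre s) :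
    IsMeagre (flipMap g ⁻¹' s) :=
  h.preimage_of_isOpenMap (continuous_flipMap g) (isOpenMap_flipMap g)

end Flip



variable {I : Set (Set ℕ)}

lemma ideal_flip_invariant
    (hUnion : ∀ A B : Set ℕ, A ∈ I → B ∈ I → A ∪ B ∈ I)
    (hSub : ∀ A B : Set ℕ, A ⊆ B → B ∈ I → A ∈ I)
    (hFin : ∀ A : Set ℕ, A.Finite → A ∈ I)
    {g : ℕ → Bool} (hg : {n | g n = true}.Finite) :
    flipMap g ⁻¹' (idealSet I) = idealSet I := by
  have key : ∀ t : ℕ → Bool, t ∈ idealSet I → flipMap g t ∈ idealSet I := by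
    intro t ht
    have hsub : {n : ℕ | flipMap g t n = true} ⊆ {n : ℕ | t n = true} ∪ {n : ℕ | g n = true} := by
      intro n hn
      simp only [flipMap, Set.mem_setOf_eq] at hn
      simp only [Set.mem_union, Set.mem_setOf_eq]
      cases hgn : g n <;> cases htn : t n <;> rw [hgn, htn] at hn <;> simp_all
    exact hSub _ _ hsub (hUnion _ _ ht (hFin _ hg))
  ext t
  constructor
  · intro ht
    have := key (flipMap g t) ht
    rwa [← Function.comp_apply (f := flipMap g) (g := flipMap g), flipMap_invol] at this
  · exact fun ht => key t ht

lemma zero_one_law {S : Set (ℕ → Bool)} (hBM : BaireMeasurableSet S)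
    (hinv : ∀ g : ℕ → Bool, {n | g n = true}.Finite → flipMap g ⁻¹' S = S)
    (hnm : ¬ IsMeagre S) : IsMeagre Sᶜ := by
  obtain ⟨U, hUopen, heq⟩ := hBM.residualEq_isOpen
  -- the two halves of the symmetric difference are meager
  have hSU : IsMeagre (S \ U) := by
    have : (S \ U)ᶜ ∈ residual _ := by
      filter_upwards [heq] with t ht
      simp only [Set.mem_compl_iff, Set.mem_diff, not_and, not_not]
      intro hts
      have h2 : t ∈ S ↔ t ∈ U := Iff.of_eq ht
      exact h2.1 hts
    exact this
  have hUS : IsMeagre (U \ S) := by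
    have : (U \ S)ᶜ ∈ residual _ := by
      filter_upwards [heq] with t ht
      simp only [Set.mem_compl_iff, Set.mem_diff, not_and, not_not]
      intro htu
      have h2 : t ∈ S ↔ t ∈ U := Iff.of_eq ht
      exact h2.2 htu
    exact this
  -- U is nonempty
  have hUne : U.Nonempty := by
    rcases Set.eq_empty_or_nonempty U with h | h
    · exfalso
      apply hnm
      have : S ⊆ S \ U := by intro t ht; exact ⟨ht, by simp [h]⟩
      exact hSU.mono this
    · exact h
  rcases hUne with ⟨t₀, ht₀⟩
  obtain ⟨m, hm⟩ := exists_cyl_subset hUopen ht₀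
  -- for each pattern p on [0,m), the cylinder minus S is meager
  have key : ∀ p : ℕ → Bool, IsMeagre ({t : ℕ → Bool | ∀ i < m, t i = p i} \ S) := by
    intro p
    set g : ℕ → Bool := fun n => if n < m then xor (p n) (t₀ n) else false with hgdef
    have hgfin : {n | g n = true}.Finite := by
      apply Set.Finite.subset (Set.finite_Iio m)
      intro n hn
      simp only [hgdef, Set.mem_setOf_eq] at hn
      by_contra hnm'
      simp [Set.mem_Iio] at hnm'
      rw [if_neg (by omega)] at hn
      exact Bool.false_ne_true hn
    have hmap : {t : ℕ → Bool | ∀ i < m, t i = p i} ⊆ flipMap g ⁻¹' {t : ℕ → Bool | ∀ i < m, t i = t₀ i} := by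
      intro t ht
      simp only [Set.mem_preimage, Set.mem_setOf_eq]
      intro i hi
      simp only [flipMap, hgdef, if_pos hi, ht i hi]
      cases p i <;> cases t₀ i <;> rfl
    have hsub : {t : ℕ → Bool | ∀ i < m, t i = p i} \ S ⊆ flipMap g ⁻¹' ({t : ℕ → Bool | ∀ i < m, t i = t₀ i} \ S) := by
      intro t ⟨ht1, ht2⟩
      refine ⟨hmap ht1, ?_⟩
      show flipMap g t ∉ S
      rw [← hinv g hgfin] at ht2
      exact ht2
    have hcylS : IsMeagre ({t : ℕ → Bool | ∀ i < m, t i = t₀ i} \ S) := by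
      apply hUS.mono
      intro t ⟨ht1, ht2⟩
      exact ⟨hm t ht1, ht2⟩
    exact (isMeagre_preimage_flipMap hcylS).mono hsub
  -- Sᶜ is covered by the finitely many cylinders minus S
  have hcover : Sᶜ ⊆ ⋃ p : Fin m → Bool,
      ({t : ℕ → Bool | ∀ i < m, t i = (fun n => if h : n < m then p ⟨n, h⟩ else false) i} \ S) := by
    intro t ht
    refine Set.mem_iUnion.2 ⟨fun i => t i, ?_, ht⟩
    intro i hi
    simp [dif_pos hi]
  exact (isMeagre_iUnion_countable (fun p => key _)).mono hcover

lemma ideal_isMeagre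
    (hUnion : ∀ A B : Set ℕ, A ∈ I → B ∈ I → A ∪ B ∈ I)
    (hSub : ∀ A B : Set ℕ, A ⊆ B → B ∈ I → A ∈ I)
    (hProper : (Set.univ : Set ℕ) ∉ I)
    (hFin : ∀ A : Set ℕ, A.Finite → A ∈ I)
    (hBP : BaireMeasurableSet (idealSet I)) :
    IsMeagre (idealSet I) := by
  by_contra hnm
  have hco : IsMeagre (idealSet I)ᶜ :=
    zero_one_law hBP (fun g hg => ideal_flip_invariant hUnion hSub hFin hg) hnm
  -- the complement map
  have hco' : IsMeagre ((flipMap (fun _ => true)) ⁻¹' (idealSet I)ᶜ) :=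
    isMeagre_preimage_flipMap hco
  have hres : (idealSet I) ∩ (flipMap (fun _ => true) ⁻¹' (idealSet I)) ∈ residual _ := by
    have h1 : (idealSet I) ∈ residual _ := by rw [← compl_compl (idealSet I)]; exact hco
    have h2 : (flipMap (fun _ => true) ⁻¹' (idealSet I)) ∈ residual _ := by
      have := hco'
      rw [IsMeagre] at this
      rwa [← Set.preimage_compl, compl_compl] at this
    exact Filter.inter_mem h1 h2
  have : ((idealSet I) ∩ (flipMap (fun _ => true) ⁻¹' (idealSet I))).Nonempty := by
    have hd := dense_of_mem_residual hres
    exact hd.nonempty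
  rcases this with ⟨t, ht1, ht2⟩
  apply hProper
  have hA : {n : ℕ | t n = true} ∈ I := ht1
  have hAc : {n : ℕ | t n = true}ᶜ ∈ I := by
    have : {n : ℕ | flipMap (fun _ => true) t n = true} ∈ I := ht2
    convert this using 1
    ext n
    simp only [Set.mem_compl_iff, Set.mem_setOf_eq, flipMap]
    cases t n <;> simp
  have := hUnion _ _ hA hAc
  rwa [Set.union_compl_self] at this


lemma interior_union_closed_empty {Z : Type*} [TopologicalSpace Z] {s t : Set Z}
    (hs : IsClosed s) (hsi : interior s = ∅) (hti : interior t = ∅) :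
    interior (s ∪ t) = ∅ := by
  have h1 : interior (s ∪ t) \ s ⊆ interior t := by
    apply interior_maximal
    · intro z hz
      rcases (interior_subset hz.1 : z ∈ s ∪ t) with h | h
      · exact absurd h hz.2
      · exact h
    · exact isOpen_interior.sdiff hs
  rw [hti, Set.subset_empty_iff, Set.diff_eq_empty] at h1
  have h2 : interior (s ∪ t) ⊆ interior s := interior_maximal h1 isOpen_interior
  rw [hsi, Set.subset_empty_iff] at h2
  exact h2

lemma interior_finset_union_closed_empty {Z : Type*} [TopologicalSpace Z]
    (s : Finset ℕ) (G : ℕ → Set Z) (hG : ∀ i, IsClosed (G i))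
    (hGe : ∀ i, interior (G i) = ∅) : interior (⋃ i ∈ s, G i) = ∅ := by
  induction s using Finset.induction_on with
  | empty => simp
  | insert a s' h ih =>
      rw [Finset.set_biUnion_insert]
      exact interior_union_closed_empty (hG a) (hGe a) ih

lemma exists_avoiding_pattern {F : Set (ℕ → Bool)} (hF : IsClosed F)
    (hint : interior F = ∅) (m : ℕ) :
    ∃ b : ℕ, ∃ c : ℕ → Bool, m < b ∧ ∀ t ∈ F, ∃ i, m ≤ i ∧ i < b ∧ t i ≠ c i := by
  classical
  -- head extension and embedding
  set ext : (Fin m → Bool) → (ℕ → Bool) := fun p n => if h : n < m then p ⟨n, h⟩ else false with hext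
  set emb : (ℕ → Bool) → (ℕ → Bool) → (ℕ → Bool) :=
    fun h t' n => if n < m then h n else t' (n - m) with hemb
  have hembcont : ∀ h : ℕ → Bool, Continuous (emb h) := by
    intro h
    refine continuous_pi fun n => ?_
    by_cases hn : n < m
    · simpa [hemb, hn] using continuous_const
    · simpa [hemb, hn] using continuous_apply (n - m)
  set sp : (Fin m → Bool) → Set (ℕ → Bool) := fun p => emb (ext p) ⁻¹' F with hsp
  have hspclosed : ∀ p, IsClosed (sp p) := fun p => hF.preimage (hembcont _)
  have hspint : ∀ p, interior (sp p) = ∅ := by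
    intro p
    by_contra hne
    rcases Set.nonempty_iff_ne_empty.2 hne with ⟨t₀', ht₀'⟩
    obtain ⟨l, hl⟩ := exists_cyl_subset isOpen_interior ht₀'
    -- the cylinder Q is inside F
    set Q : Set (ℕ → Bool) :=
      {t | (∀ i < m, t i = ext p i) ∧ ∀ j < l, t (m + j) = t₀' j} with hQ
    have hQF : Q ⊆ F := by
      rintro t ⟨h1, h2⟩
      have htail : ∀ j < l, (fun j => t (m + j)) j = t₀' j := h2
      have h3 : (fun j => t (m + j)) ∈ sp p := by
        apply interior_subset
        exact hl _ htail
      have h4 : emb (ext p) (fun j => t (m + j)) = t := by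
        funext n
        by_cases hn : n < m
        · simp only [hemb, if_pos hn]; exact (h1 n hn).symm
        · simp only [hemb, if_neg hn]
          congr 1
          omega
      have h5 : emb (ext p) (fun j => t (m + j)) ∈ F := h3
      rwa [h4] at h5
    have hQopen : IsOpen Q := by
      have : Q = {t : ℕ → Bool | ∀ i ∈ Finset.range m, t i = ext p i} ∩
          {t : ℕ → Bool | ∀ i ∈ (Finset.range l).image (fun j => m + j),
            t i = (fun i => t₀' (i - m)) i} := by
        ext t
        simp only [hQ, Set.mem_inter_iff, Set.mem_setOf_eq, Finset.mem_range, Finset.mem_image]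
        constructor
        · rintro ⟨h1, h2⟩
          refine ⟨h1, ?_⟩
          rintro i ⟨j, hj, rfl⟩
          simpa using h2 j hj
        · rintro ⟨h1, h2⟩
          refine ⟨h1, fun j hj => ?_⟩
          simpa using h2 (m + j) ⟨j, hj, rfl⟩
      rw [this]
      exact (isOpen_cyl _ _).inter (isOpen_cyl _ _)
    have hQne : Q.Nonempty := by
      refine ⟨emb (ext p) t₀', ?_, ?_⟩
      · intro i hi; simp [hemb, if_pos hi]
      · intro j hj; simp [hemb]
    have : (interior F).Nonempty := hQne.mono (interior_maximal hQF hQopen)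
    rw [hint] at this
    exact Set.not_nonempty_empty this
  -- union over all heads
  set F' : Set (ℕ → Bool) := ⋃ p : Fin m → Bool, sp p with hF'
  have hF'closed : IsClosed F' := isClosed_iUnion_of_finite hspclosed
  have hF'meagre : IsMeagre F' :=
    isMeagre_iUnion_countable fun p =>
      isMeagre_of_isNowhereDense ((hspclosed p).isNowhereDense_iff.2 (hspint p))
  have hdense : Dense F'ᶜ := dense_of_mem_residual hF'meagre
  obtain ⟨t₀, ht₀⟩ := hdense.nonempty
  obtain ⟨l, hl⟩ := exists_cyl_subset hF'closed.isOpen_compl ht₀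
  refine ⟨m + l + 1, fun i => t₀ (i - m), by omega, ?_⟩
  intro t htF
  by_contra hcon
  push_neg at hcon
  -- the tail of t agrees with t₀ on [0, l)
  have htail : ∀ j < l, (fun j => t (m + j)) j = t₀ j := by
    intro j hj
    have := hcon (m + j) (by omega) (by omega)
    simpa using this
  have h1 : (fun j => t (m + j)) ∈ F'ᶜ := hl _ htail
  apply h1
  refine Set.mem_iUnion.2 ⟨fun i => t i, ?_⟩
  show emb (ext (fun i : Fin m => t i)) (fun j => t (m + j)) ∈ F
  have h4 : emb (ext (fun i : Fin m => t i)) (fun j => t (m + j)) = t := by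
    funext n
    by_cases hn : n < m
    · simp only [hemb, hext]
      rw [if_pos hn, dif_pos hn]
    · simp only [hemb, if_neg hn]
      congr 1
      omega
  rwa [h4]

lemma jalali_naini {I : Set (Set ℕ)}
    (hUnion : ∀ A B : Set ℕ, A ∈ I → B ∈ I → A ∪ B ∈ I)
    (hSub : ∀ A B : Set ℕ, A ⊆ B → B ∈ I → A ∈ I)
    (hProper : (Set.univ : Set ℕ) ∉ I)
    (hFin : ∀ A : Set ℕ, A.Finite → A ∈ I)
    (hBP : BaireMeasurableSet (idealSet I)) :
    ∃ a : ℕ → ℕ, StrictMono a ∧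
      ∀ A : Set ℕ, A ∈ I → {j : ℕ | ∀ i, a j ≤ i → i < a (j + 1) → i ∈ A}.Finite := by
  classical
  have hmeag := ideal_isMeagre hUnion hSub hProper hFin hBP
  rw [isMeagre_iff_countable_union_isNowhereDense] at hmeag
  obtain ⟨S, hnwd, hScount, hScover⟩ := hmeag
  have hS'count : (insert (∅ : Set (ℕ → Bool)) S).Countable := hScount.insert _
  obtain ⟨f, hf⟩ := hS'count.exists_eq_range (Set.insert_nonempty _ _)
  -- the increasing closed nwd sets
  set F : ℕ → Set (ℕ → Bool) := fun k => ⋃ i ∈ Finset.range (k + 1), closure (f i) with hFdef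
  have hFclosed : ∀ k, IsClosed (F k) := fun k =>
    ((Finset.range (k + 1)).finite_toSet).isClosed_biUnion fun i _ => isClosed_closure
  have hfnwd : ∀ i, IsNowhereDense (f i) := by
    intro i
    have : f i ∈ insert (∅ : Set (ℕ → Bool)) S := hf ▸ Set.mem_range_self i
    rcases this with h | h
    · rw [h]; exact isNowhereDense_empty
    · exact hnwd _ h
  have hFint : ∀ k, interior (F k) = ∅ := by
    intro k
    apply interior_finset_union_closed_empty
    · exact fun i => isClosed_closure
    · intro i
      have := (hfnwd i).closure
      rwa [IsNowhereDense, closure_closure] at this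
  have hFmono : ∀ j k, j ≤ k → F j ⊆ F k := by
    intro j k hjk t ht
    simp only [hFdef, Set.mem_iUnion] at ht ⊢
    obtain ⟨i, hi, h⟩ := ht
    refine ⟨i, ?_, h⟩
    simp only [Finset.mem_range] at hi ⊢
    omega
  have hFcover : idealSet I ⊆ ⋃ k, F k := by
    intro t ht
    rcases hScover ht with ⟨s, hsS, hts⟩
    have : s ∈ Set.range f := hf ▸ Set.mem_insert_of_mem _ hsS
    rcases this with ⟨i, rfl⟩
    exact Set.mem_iUnion.2 ⟨i, Set.mem_biUnion (Finset.self_mem_range_succ i) (subset_closure hts)⟩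
  -- choose the avoiding patterns
  have hstep : ∀ j m, ∃ b : ℕ, ∃ c : ℕ → Bool, m < b ∧
      ∀ t ∈ F j, ∃ i, m ≤ i ∧ i < b ∧ t i ≠ c i :=
    fun j m => exists_avoiding_pattern (hFclosed j) (hFint j) m
  choose b c hb hP using hstep
  set a : ℕ → ℕ := fun j => Nat.rec 0 (fun i ai => b i ai) j with hadef
  have hasucc : ∀ j, a (j + 1) = b j (a j) := fun j => rfl
  have hamono : StrictMono a := by
    apply strictMono_nat_of_lt_succ
    intro j
    rw [hasucc]
    exact hb j (a j)
  refine ⟨a, hamono, ?_⟩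
  intro A hA
  by_contra hinf
  rw [← Set.not_infinite, not_not] at hinf
  set N := {j : ℕ | ∀ i, a j ≤ i → i < a (j + 1) → i ∈ A} with hN
  -- the subset of A realizing the patterns
  set A' : Set ℕ := {i | ∃ j ∈ N, (a j ≤ i ∧ i < a (j + 1)) ∧ (c j (a j)) i = true} with hA'
  have hA'A : A' ⊆ A := by
    rintro i ⟨j, hjN, ⟨h1, h2⟩, _⟩
    exact hjN i h1 h2
  have hA'I : A' ∈ I := hSub _ _ hA'A hA
  set χ : ℕ → Bool := fun n => decide (n ∈ A') with hχ
  have hχI : χ ∈ idealSet I := by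
    show {n : ℕ | χ n = true} ∈ I
    have : {n : ℕ | χ n = true} = A' := by ext n; simp [hχ]
    rwa [this]
  rcases Set.mem_iUnion.1 (hFcover hχI) with ⟨k₀, hk₀⟩
  obtain ⟨j, hjN, hjk⟩ := hinf.exists_gt k₀
  have hχF : χ ∈ F j := hFmono k₀ j (le_of_lt hjk) hk₀
  obtain ⟨i, hi1, hi2, hne⟩ := hP j (a j) χ hχF
  rw [← hasucc] at hi2
  -- intervals are disjoint
  have hdisj : ∀ j' , j' ∈ N → a j' ≤ i → i < a (j' + 1) → j' = j := by
    intro j' _ h1 h2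
    by_contra hne'
    rcases Nat.lt_or_ge j' j with h | h
    · have : a (j' + 1) ≤ a j := hamono.monotone (Nat.succ_le_of_lt h)
      omega
    · have hj'j : j < j' := by omega
      have : a (j + 1) ≤ a j' := hamono.monotone (Nat.succ_le_of_lt hj'j)
      omega
  apply hne
  by_cases hc : (c j (a j)) i = true
  · have : i ∈ A' := ⟨j, hjN, ⟨hi1, hi2⟩, hc⟩
    simp only [hχ, decide_eq_true_eq]
    rw [hc]
    simpa using this
  · have : i ∉ A' := by
      rintro ⟨j', hj'N, ⟨h1, h2⟩, hc'⟩
      rw [hdisj j' hj'N h1 h2] at hc'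
      exact hc hc'
    simp only [hχ]
    rw [Bool.eq_iff_iff]
    simp [this, hc]


variable {X : Type*} [NormedAddCommGroup X] [NormedSpace ℝ X]

lemma uniform_tail_bound {I : Set (Set ℕ)}
    (hUnion : ∀ A B : Set ℕ, A ∈ I → B ∈ I → A ∪ B ∈ I)
    (hSub : ∀ A B : Set ℕ, A ⊆ B → B ∈ I → A ∈ I)
    (hProper : (Set.univ : Set ℕ) ∉ I)
    (hFin : ∀ A : Set ℕ, A.Finite → A ∈ I)
    (hBP : BaireMeasurableSet (idealSet I))
    (x : ℕ → X)
    (hnm : ¬ IsMeagre {t : ℕ → Bool | ∃ M > (0 : ℝ),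
      {n : ℕ | M < ‖∑ i ∈ Finset.range n, if t i then x i else 0‖} ∈ I}) :
    ∃ (m : ℕ) (C : ℝ), 0 < C ∧ ∀ E : Finset ℕ, (∀ i ∈ E, m ≤ i) → ‖∑ i ∈ E, x i‖ ≤ C := by
  classical
  obtain ⟨a, ha, hJN⟩ := jalali_naini hUnion hSub hProper hFin hBP
  set S : (ℕ → Bool) → ℕ → X :=
    fun t n => ∑ i ∈ Finset.range n, if t i then x i else 0 with hSdef
  set A : Set (ℕ → Bool) := {t | ∃ M > (0 : ℝ), {n : ℕ | M < ‖S t n‖} ∈ I} with hA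
  set H : ℕ → ℕ → Set (ℕ → Bool) := fun M r =>
    {t | ∀ j, r ≤ j → ∃ n, a j ≤ n ∧ n < a (j + 1) ∧ ‖S t n‖ ≤ (M : ℝ) + 1} with hH
  -- A is covered by the H M r
  have hcover : A ⊆ ⋃ M : ℕ, ⋃ r : ℕ, H M r := by
    rintro t ⟨M₀, hM₀pos, hM₀⟩
    have hID : {n : ℕ | (⌈M₀⌉₊ : ℝ) + 1 < ‖S t n‖} ∈ I := by
      apply hSub _ _ _ hM₀
      intro n hn
      simp only [Set.mem_setOf_eq] at hn ⊢
      have := Nat.le_ceil M₀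
      linarith
    have hfin := hJN _ hID
    obtain ⟨r, hr⟩ := hfin.bddAbove
    refine Set.mem_iUnion.2 ⟨⌈M₀⌉₊, Set.mem_iUnion.2 ⟨r + 1, ?_⟩⟩
    intro j hj
    have hnotmem : j ∉ {j : ℕ | ∀ i, a j ≤ i → i < a (j + 1) →
        i ∈ {n : ℕ | (⌈M₀⌉₊ : ℝ) + 1 < ‖S t n‖}} := by
      intro hmem
      have := hr hmem
      omega
    simp only [Set.mem_setOf_eq, not_forall] at hnotmem
    obtain ⟨n, h1, h2, h3⟩ := hnotmem
    exact ⟨n, h1, h2, le_of_not_gt h3⟩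
  -- some H M r is non-meager
  have hex : ∃ M r, ¬ IsMeagre (H M r) := by
    by_contra hall
    push_neg at hall
    apply hnm
    have : IsMeagre (⋃ M : ℕ, ⋃ r : ℕ, H M r) :=
      isMeagre_iUnion_countable fun M => isMeagre_iUnion_countable fun r => hall M r
    exact this.mono hcover
  obtain ⟨M, r, hMr⟩ := hex
  -- H M r is closed
  have hScont : ∀ n, Continuous fun t : ℕ → Bool => S t n := by
    intro n
    apply continuous_finset_sum
    intro i _
    exact (continuous_of_discreteTopology (f := fun b : Bool => if b then x i else 0)).comp
      (continuous_apply i)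
  have hHclosed : IsClosed (H M r) := by
    have : H M r = ⋂ j : ℕ, {t : ℕ → Bool | r ≤ j →
        ∃ n, a j ≤ n ∧ n < a (j + 1) ∧ ‖S t n‖ ≤ (M : ℝ) + 1} := by
      ext t; simp only [hH, Set.mem_setOf_eq, Set.mem_iInter]
    rw [this]
    apply isClosed_iInter
    intro j
    by_cases hj : r ≤ j
    · have : {t : ℕ → Bool | r ≤ j → ∃ n, a j ≤ n ∧ n < a (j + 1) ∧ ‖S t n‖ ≤ (M : ℝ) + 1}
          = ⋃ n ∈ Finset.Ico (a j) (a (j + 1)), {t : ℕ → Bool | ‖S t n‖ ≤ (M : ℝ) + 1} := by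
        ext t
        simp only [Set.mem_setOf_eq, Set.mem_iUnion, Finset.mem_Ico, exists_prop]
        constructor
        · rintro h
          obtain ⟨n, h1, h2, h3⟩ := h hj
          exact ⟨n, ⟨h1, h2⟩, h3⟩
        · rintro ⟨n, ⟨h1, h2⟩, h3⟩ _
          exact ⟨n, h1, h2, h3⟩
      rw [this]
      apply Set.Finite.isClosed_biUnion (Finset.finite_toSet _)
      intro n _
      exact IsClosed.preimage (continuous_norm.comp (hScont n)) isClosed_Iic
    · have : {t : ℕ → Bool | r ≤ j → ∃ n, a j ≤ n ∧ n < a (j + 1) ∧ ‖S t n‖ ≤ (M : ℝ) + 1}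
          = Set.univ := by
        ext t; simp only [Set.mem_setOf_eq, Set.mem_univ, iff_true]
        intro h; exact absurd h hj
      rw [this]; exact isClosed_univ
  obtain ⟨m₀, t₀, hcyl⟩ := nonmeager_closed_cyl hHclosed hMr
  -- the partial head sum
  set P : X := ∑ i ∈ Finset.range m₀, if t₀ i then x i else 0 with hP
  -- main estimate
  have key : ∀ E : Finset ℕ, (∀ i ∈ E, m₀ ≤ i) → ‖P + ∑ i ∈ E, x i‖ ≤ (M : ℝ) + 1 := by
    intro E hE
    set tE : ℕ → Bool := fun i => if i < m₀ then t₀ i else decide (i ∈ E) with htE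
    have htEcyl : ∀ i < m₀, tE i = t₀ i := fun i hi => by simp [htE, if_pos hi]
    have htEH : tE ∈ H M r := hcyl tE htEcyl
    set jj : ℕ := max r (max (E.sup id + 1) m₀) with hjj
    obtain ⟨n, hn1, hn2, hn3⟩ := htEH jj (le_max_left _ _)
    have hajj : jj ≤ a jj := ha.le_apply
    have hnm₀ : m₀ ≤ n := le_trans (le_trans (le_max_of_le_right (le_max_right _ _)) hajj) hn1
    have hnE : ∀ i ∈ E, i < n := by
      intro i hi
      have h1 : i ≤ E.sup id := Finset.le_sup (f := id) hi
      have : E.sup id + 1 ≤ jj := le_max_of_le_right (le_max_left _ _)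
      omega
    -- compute S tE n
    have hsum : S tE n = P + ∑ i ∈ E, x i := by
      have hsplit : S tE n = (∑ i ∈ Finset.range m₀, if tE i then x i else 0)
          + ∑ i ∈ Finset.Ico m₀ n, if tE i then x i else 0 := by
        rw [hSdef]
        simp only
        rw [Finset.range_eq_Ico, ← Finset.sum_Ico_consecutive _ (Nat.zero_le m₀) hnm₀,
          ← Finset.range_eq_Ico]
      rw [hsplit]
      congr 1
      · apply Finset.sum_congr rfl
        intro i hi
        rw [Finset.mem_range] at hi
        rw [htEcyl i hi]
      · have h1 : ∀ i ∈ Finset.Ico m₀ n, (if tE i then x i else 0) = if i ∈ E then x i else 0 := by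
          intro i hi
          rw [Finset.mem_Ico] at hi
          simp only [htE, if_neg (by omega : ¬ i < m₀)]
          by_cases hiE : i ∈ E <;> simp [hiE]
        rw [Finset.sum_congr rfl h1, Finset.sum_ite_mem]
        congr 1
        apply Finset.inter_eq_right.2
        intro i hi
        rw [Finset.mem_Ico]
        exact ⟨hE i hi, hnE i hi⟩
    rw [← hsum]
    exact hn3
  have hPbound : ‖P‖ ≤ (M : ℝ) + 1 := by
    have := key ∅ (by simp)
    simpa using this
  refine ⟨m₀, 2 * ((M : ℝ) + 1), by positivity, ?_⟩
  intro E hE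
  have h1 := key E hE
  calc ‖∑ i ∈ E, x i‖ = ‖(P + ∑ i ∈ E, x i) - P‖ := by congr 1; abel
    _ ≤ ‖P + ∑ i ∈ E, x i‖ + ‖P‖ := norm_sub_le _ _
    _ ≤ ((M : ℝ) + 1) + ((M : ℝ) + 1) := add_le_add h1 hPbound
    _ = 2 * ((M : ℝ) + 1) := by ring


variable {X : Type*} [NormedAddCommGroup X] [NormedSpace ℝ X]

lemma UC_of_summable {x : ℕ → X} (h : Summable x) : UnconditionallyConvergent x := by
  intro p
  have h2 : Summable (x ∘ p) := (Equiv.summable_iff p).2 h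
  exact ⟨∑' n, (x ∘ p) n, h2.hasSum.tendsto_sum_nat⟩

lemma blocks_of_not_UC [CompleteSpace X] {x : ℕ → X} (hx : ¬ UnconditionallyConvergent x) :
    ∃ δ : ℝ, 0 < δ ∧ ∀ N : ℕ, ∃ E : Finset ℕ, (∀ i ∈ E, N ≤ i) ∧ δ ≤ ‖∑ i ∈ E, x i‖ := by
  have hsum : ¬ Summable x := fun h => hx (UC_of_summable h)
  rw [summable_iff_vanishing] at hsum
  push_neg at hsum
  obtain ⟨e, he, h⟩ := hsum
  obtain ⟨δ, hδ, hball⟩ := Metric.mem_nhds_iff.1 he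
  refine ⟨δ, hδ, fun N => ?_⟩
  obtain ⟨t, hdisj, hne⟩ := h (Finset.range N)
  refine ⟨t, fun i hi => ?_, ?_⟩
  · by_contra hlt
    push_neg at hlt
    exact (Finset.disjoint_left.1 hdisj) hi (Finset.mem_range.2 hlt)
  · by_contra hlt
    push_neg at hlt
    apply hne
    apply hball
    rw [Metric.mem_ball, dist_zero_right]
    exact hlt

lemma sum_abs_dual_le {u : ℕ → X} {C : ℝ} (hC : ∀ F : Finset ℕ, ‖∑ i ∈ F, u i‖ ≤ C)
    (f : X →L[ℝ] ℝ) (F : Finset ℕ) : ∑ i ∈ F, |f (u i)| ≤ 2 * C * ‖f‖ := by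
  classical
  have key : ∀ G : Finset ℕ, f (∑ i ∈ G, u i) ≤ C * ‖f‖ := by
    intro G
    calc f (∑ i ∈ G, u i) ≤ |f (∑ i ∈ G, u i)| := le_abs_self _
      _ ≤ ‖f‖ * ‖∑ i ∈ G, u i‖ := f.le_opNorm _
      _ ≤ ‖f‖ * C := by
          apply mul_le_mul_of_nonneg_left (hC G) (norm_nonneg f)
      _ = C * ‖f‖ := mul_comm _ _
  rw [← Finset.sum_filter_add_sum_filter_not F (fun i => 0 ≤ f (u i))]
  have h1 : ∑ i ∈ F.filter (fun i => 0 ≤ f (u i)), |f (u i)|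
      = f (∑ i ∈ F.filter (fun i => 0 ≤ f (u i)), u i) := by
    rw [map_sum]
    apply Finset.sum_congr rfl
    intro i hi
    exact abs_of_nonneg (Finset.mem_filter.1 hi).2
  have h2 : ∑ i ∈ F.filter (fun i => ¬ 0 ≤ f (u i)), |f (u i)|
      = - f (∑ i ∈ F.filter (fun i => ¬ 0 ≤ f (u i)), u i) := by
    rw [map_sum, ← Finset.sum_neg_distrib]
    apply Finset.sum_congr rfl
    intro i hi
    exact abs_of_neg (lt_of_not_ge (Finset.mem_filter.1 hi).2)
  rw [h1, h2]
  have h3 := key (F.filter (fun i => 0 ≤ f (u i)))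
  have h4 : - f (∑ i ∈ F.filter (fun i => ¬ 0 ≤ f (u i)), u i) ≤ C * ‖f‖ := by
    have : f (- ∑ i ∈ F.filter (fun i => ¬ 0 ≤ f (u i)), u i) ≤ C * ‖f‖ := by
      rw [← Finset.sum_neg_distrib]
      calc f (∑ i ∈ F.filter (fun i => ¬ 0 ≤ f (u i)), -u i)
          ≤ |f (∑ i ∈ F.filter (fun i => ¬ 0 ≤ f (u i)), -u i)| := le_abs_self _
        _ ≤ ‖f‖ * ‖∑ i ∈ F.filter (fun i => ¬ 0 ≤ f (u i)), -u i‖ := f.le_opNorm _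
        _ = ‖f‖ * ‖∑ i ∈ F.filter (fun i => ¬ 0 ≤ f (u i)), u i‖ := by
            rw [Finset.sum_neg_distrib, norm_neg]
        _ ≤ ‖f‖ * C := mul_le_mul_of_nonneg_left (hC _) (norm_nonneg f)
        _ = C * ‖f‖ := mul_comm _ _
    rwa [map_neg] at this
  linarith

lemma coeff_smul_bound {u : ℕ → X} {C : ℝ} (hC : ∀ F : Finset ℕ, ‖∑ i ∈ F, u i‖ ≤ C)
    (F : Finset ℕ) (aco : ℕ → ℝ) {β : ℝ} (hβ : 0 ≤ β) (ha : ∀ i ∈ F, |aco i| ≤ β) :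
    ‖∑ i ∈ F, aco i • u i‖ ≤ 2 * C * β := by
  obtain ⟨f, hf1, hf2⟩ := exists_dual_vector'' ℝ (∑ i ∈ F, aco i • u i)
  have hf2' : f (∑ i ∈ F, aco i • u i) = ‖∑ i ∈ F, aco i • u i‖ := by exact_mod_cast hf2
  rw [← hf2']
  have : f (∑ i ∈ F, aco i • u i) = ∑ i ∈ F, aco i * f (u i) := by
    rw [map_sum]
    apply Finset.sum_congr rfl
    intro i _
    rw [map_smul]
    rfl
  rw [this]
  calc ∑ i ∈ F, aco i * f (u i) ≤ |∑ i ∈ F, aco i * f (u i)| := le_abs_self _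
    _ ≤ ∑ i ∈ F, |aco i * f (u i)| := Finset.abs_sum_le_sum_abs _ _
    _ ≤ ∑ i ∈ F, β * |f (u i)| := by
        apply Finset.sum_le_sum
        intro i hi
        rw [abs_mul]
        exact mul_le_mul_of_nonneg_right (ha i hi) (abs_nonneg _)
    _ = β * ∑ i ∈ F, |f (u i)| := by rw [Finset.mul_sum]
    _ ≤ β * (2 * C * ‖f‖) := mul_le_mul_of_nonneg_left (sum_abs_dual_le hC f F) hβ
    _ ≤ β * (2 * C * 1) := by
        have hC0 : (0:ℝ) ≤ C := by simpa using hC ∅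
        have h2 : 2 * C * ‖f‖ ≤ 2 * C * 1 := mul_le_mul_of_nonneg_left hf1 (by positivity)
        exact mul_le_mul_of_nonneg_left h2 hβ
    _ = 2 * C * β := by ring

lemma weak_null {u : ℕ → X} {C : ℝ} (hC : ∀ F : Finset ℕ, ‖∑ i ∈ F, u i‖ ≤ C)
    (f : X →L[ℝ] ℝ) : Tendsto (fun n => f (u n)) atTop (nhds 0) := by
  have hsummable : Summable (fun n => |f (u n)|) := by
    apply summable_of_sum_range_le (c := 2 * C * ‖f‖) (fun n => abs_nonneg _)
    intro n
    exact sum_abs_dual_le hC f (Finset.range n)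
  rw [tendsto_zero_iff_norm_tendsto_zero]
  simpa [Real.norm_eq_abs] using hsummable.tendsto_atTop_zero

lemma freq_far_from_span {u : ℕ → X} {δ B : ℝ} (hδ : 0 < δ) (hlb : ∀ n, δ ≤ ‖u n‖)
    (hub : ∀ n, ‖u n‖ ≤ B)
    (hwn : ∀ f : X →L[ℝ] ℝ, Tendsto (fun n => f (u n)) atTop (nhds 0))
    (F : Submodule ℝ X) (hFfd : FiniteDimensional ℝ F) :
    ∃ᶠ n in atTop, δ / 3 ≤ infDist (u n) (F : Set X) := by
  haveI := hFfd
  by_contra hcon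
  rw [not_frequently] at hcon
  rw [eventually_atTop] at hcon
  obtain ⟨N, hN⟩ := hcon
  have hlt : ∀ n, infDist (u (N + n)) (F : Set X) < δ / 3 := by
    intro n
    have := hN (N + n) (by omega)
    linarith [not_le.1 this]
  have hFne : (F : Set X).Nonempty := ⟨0, F.zero_mem⟩
  have hch : ∀ n, ∃ y ∈ (F : Set X), dist (u (N + n)) y < δ / 3 := by
    intro n
    exact (Metric.infDist_lt_iff hFne).1 (hlt n)
  choose v hvF hvd using hch
  set w : ℕ → F := fun n => ⟨v n, hvF n⟩ with hw
  have hwb : ∀ n, w n ∈ Metric.closedBall (0 : F) (B + δ / 3) := by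
    intro n
    rw [Metric.mem_closedBall, dist_zero_right]
    have h2 : ‖v n - u (N + n)‖ < δ / 3 := by
      rw [norm_sub_rev, ← dist_eq_norm]
      exact hvd n
    have h1 : ‖v n‖ ≤ ‖v n - u (N + n)‖ + ‖u (N + n)‖ := by
      have hveq : v n = (v n - u (N + n)) + u (N + n) := by abel
      nth_rewrite 1 [hveq]
      exact norm_add_le _ _
    have : ‖(w n : X)‖ = ‖v n‖ := rfl
    show ‖w n‖ ≤ B + δ / 3
    have h4 : ‖w n‖ = ‖v n‖ := rfl
    rw [h4]
    have := hub (N + n)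
    linarith
  haveI : ProperSpace F := FiniteDimensional.proper ℝ F
  obtain ⟨b, _, φ, hφ, hconv⟩ :=
    tendsto_subseq_of_bounded Metric.isBounded_closedBall hwb
  -- the limit has small dual pairings
  have hsmall : ∀ f : X →L[ℝ] ℝ, |f (b : X)| ≤ (δ / 3) * ‖f‖ := by
    intro f
    have hcont : Tendsto (fun k => f ((w (φ k) : X))) atTop (nhds (f (b : X))) := by
      apply (f.continuous.tendsto _).comp
      exact (continuous_subtype_val.tendsto _).comp hconv
    have hptwise : ∀ k, |f ((w (φ k) : X))| ≤ |f (u (N + φ k))| + ‖f‖ * (δ / 3) := by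
      intro k
      have h1 : f ((w (φ k) : X)) = f (u (N + φ k)) - f (u (N + φ k) - v (φ k)) := by
        have hcoe : ((w (φ k) : X)) = v (φ k) := rfl
        rw [hcoe, map_sub]; ring
      rw [h1]
      calc |f (u (N + φ k)) - f (u (N + φ k) - v (φ k))|
          ≤ |f (u (N + φ k))| + |f (u (N + φ k) - v (φ k))| := abs_sub _ _
        _ ≤ |f (u (N + φ k))| + ‖f‖ * ‖u (N + φ k) - v (φ k)‖ := by
            have := f.le_opNorm (u (N + φ k) - v (φ k))
            have h2 : |f (u (N + φ k) - v (φ k))| = ‖f (u (N + φ k) - v (φ k))‖ := rfl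
            linarith [f.le_opNorm (u (N + φ k) - v (φ k))]
        _ ≤ |f (u (N + φ k))| + ‖f‖ * (δ / 3) := by
            have h3 : ‖u (N + φ k) - v (φ k)‖ ≤ δ / 3 := by
              rw [← dist_eq_norm]
              exact le_of_lt (hvd (φ k))
            have := mul_le_mul_of_nonneg_left h3 (norm_nonneg f)
            linarith
    have hto0 : Tendsto (fun k => |f (u (N + φ k))| + ‖f‖ * (δ / 3)) atTop
        (nhds (0 + ‖f‖ * (δ / 3))) := by
      apply Tendsto.add _ tendsto_const_nhds
      have h2 : Tendsto (fun k => N + φ k) atTop atTop :=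
        tendsto_atTop_mono (fun k => Nat.le_add_left _ _) hφ.tendsto_atTop
      have := (hwn f).comp h2
      rw [tendsto_zero_iff_norm_tendsto_zero] at this
      simpa [Real.norm_eq_abs] using this
    have habs : Tendsto (fun k => |f ((w (φ k) : X))|) atTop (nhds (|f (b : X)|)) :=
      hcont.abs
    have := le_of_tendsto_of_tendsto' habs hto0 hptwise
    linarith
  have hbnorm : ‖(b : X)‖ ≤ δ / 3 := by
    apply NormedSpace.norm_le_dual_bound ℝ _ (by positivity)
    intro f
    have := hsmall f
    simpa [Real.norm_eq_abs] using this
  -- contradiction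
  have hconv' : Tendsto (fun k => ((w (φ k) : X))) atTop (nhds (b : X)) :=
    (continuous_subtype_val.tendsto _).comp hconv
  have hev : ∀ᶠ k in atTop, dist ((w (φ k) : X)) (b : X) < δ / 6 := by
    apply Metric.tendsto_nhds.mp hconv'
    positivity
  obtain ⟨k, hk⟩ := hev.exists
  have hd : δ ≤ ‖u (N + φ k)‖ := hlb _
  have hk' : ‖v (φ k) - (b : X)‖ < δ / 6 := by
    rw [← dist_eq_norm]
    exact hk
  have heq : u (N + φ k) = (u (N + φ k) - v (φ k)) + (v (φ k) - (b : X)) + (b : X) := by abel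
  have h6 : ‖u (N + φ k)‖ ≤ ‖u (N + φ k) - v (φ k)‖ + ‖v (φ k) - (b : X)‖ + ‖(b : X)‖ :=
    calc ‖u (N + φ k)‖
        = ‖(u (N + φ k) - v (φ k)) + (v (φ k) - (b : X)) + (b : X)‖ := by rw [← heq]
      _ ≤ ‖u (N + φ k) - v (φ k)‖ + ‖v (φ k) - (b : X)‖ + ‖(b : X)‖ := norm_add₃_le
  have h7 : ‖u (N + φ k) - v (φ k)‖ ≤ δ / 3 := by
    rw [← dist_eq_norm]; exact le_of_lt (hvd (φ k))
  linarith


lemma eventually_list {α ι : Type*} {l : Filter α} (L : List ι) (P : ι → α → Prop)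
    (h : ∀ p, ∀ᶠ n in l, P p n) : ∀ᶠ n in l, ∀ p ∈ L, P p n := by
  induction L with
  | nil => simp
  | cons a L ih =>
      filter_upwards [h a, ih] with n h1 h2
      intro p hp
      rcases List.mem_cons.1 hp with rfl | hp
      · exact h1
      · exact h2 p hp

variable {X : Type*} [NormedAddCommGroup X] [NormedSpace ℝ X]

lemma exists_sep_functional (F : Submodule ℝ X) (hcl : IsClosed (F : Set X)) {y : X} {d : ℝ}
    (hd : 0 < d) (hdist : d ≤ infDist y (F : Set X)) :
    ∃ g : X →L[ℝ] ℝ, g y = 1 ∧ ‖g‖ ≤ 1 / d ∧ ∀ z ∈ F, g z = 0 := by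
  haveI : IsClosed (F : Set X) := hcl
  -- the quotient space
  have hnorm : ∀ x : X, ‖(Submodule.Quotient.mk x : X ⧸ F)‖ = infDist x (F : Set X) := by
    intro x
    have := QuotientAddGroup.norm_mk (S := F.toAddSubgroup) x
    exact this
  have hy0 : (Submodule.Quotient.mk y : X ⧸ F) ≠ 0 := by
    intro h
    have := hnorm y
    rw [h, norm_zero] at this
    linarith
  obtain ⟨φ, hφ1, hφ2⟩ := exists_dual_vector ℝ (Submodule.Quotient.mk y : X ⧸ F) (norm_ne_zero_iff.2 hy0)
  -- the quotient map as a CLM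
  set mkQc : X →L[ℝ] X ⧸ F :=
    LinearMap.mkContinuous F.mkQ 1 (fun x => by
      simpa using Submodule.Quotient.norm_mk_le F x) with hmkQc
  set D : ℝ := ‖(Submodule.Quotient.mk y : X ⧸ F)‖ with hD
  have hDpos : 0 < D := by
    rw [hD, hnorm]; linarith
  refine ⟨D⁻¹ • (φ.comp mkQc), ?_, ?_, ?_⟩
  · show D⁻¹ * φ (mkQc y) = 1
    have : mkQc y = (Submodule.Quotient.mk y : X ⧸ F) := rfl
    rw [this]
    have hφ2' : φ (Submodule.Quotient.mk y : X ⧸ F) = D := by exact_mod_cast hφ2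
    rw [hφ2']
    field_simp
  · apply ContinuousLinearMap.opNorm_le_bound _ (by positivity)
    intro x
    have h1 : (D⁻¹ • (φ.comp mkQc)) x = D⁻¹ * φ (Submodule.Quotient.mk x) := rfl
    rw [h1, Real.norm_eq_abs, abs_mul, abs_of_pos (by positivity : (0:ℝ) < D⁻¹)]
    have h2 : |φ (Submodule.Quotient.mk x)| ≤ ‖(Submodule.Quotient.mk x : X ⧸ F)‖ := by
      have h5 := φ.le_opNorm (Submodule.Quotient.mk x : X ⧸ F)
      rw [hφ1, one_mul] at h5
      rw [← Real.norm_eq_abs]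
      exact h5
    have h3 : ‖(Submodule.Quotient.mk x : X ⧸ F)‖ ≤ ‖x‖ := Submodule.Quotient.norm_mk_le F x
    have h4 : D⁻¹ ≤ 1 / d := by
      rw [one_div]
      exact inv_anti₀ hd (hdist.trans (hnorm y).symm.le)
    calc D⁻¹ * |φ (Submodule.Quotient.mk x)| ≤ D⁻¹ * ‖x‖ :=
          mul_le_mul_of_nonneg_left (h2.trans h3) (by positivity)
      _ ≤ (1 / d) * ‖x‖ := mul_le_mul_of_nonneg_right h4 (norm_nonneg x)
  · intro z hz
    show D⁻¹ * φ (mkQc z) = 0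
    have : mkQc z = (Submodule.Quotient.mk z : X ⧸ F) := rfl
    rw [this, (Submodule.Quotient.mk_eq_zero F).2 hz, map_zero, mul_zero]

lemma selection {u : ℕ → X} {δ C : ℝ} (hδ : 0 < δ)
    (hC : ∀ F : Finset ℕ, ‖∑ i ∈ F, u i‖ ≤ C) (hlb : ∀ n, δ ≤ ‖u n‖) :
    ∃ (k : ℕ → ℕ) (g : ℕ → X →L[ℝ] ℝ), StrictMono k ∧
      (∀ j, g j (u (k j)) = 1) ∧ (∀ j, ‖g j‖ ≤ 3 / δ) ∧
      (∀ i j, i < j → g j (u (k i)) = 0) ∧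
      (∀ i j, j < i → |g j (u (k i))| ≤ (1 / 2) ^ i / 4) := by
  classical
  have hub : ∀ n, ‖u n‖ ≤ C := by
    intro n
    simpa using hC {n}
  have hwn : ∀ f : X →L[ℝ] ℝ, Tendsto (fun n => f (u n)) atTop (nhds 0) := weak_null hC
  -- the one-step existence
  have hstep : ∀ prev : List (ℕ × (X →L[ℝ] ℝ)), ∃ q : ℕ × (X →L[ℝ] ℝ),
      (∀ p ∈ prev, p.1 < q.1) ∧
      (∀ p ∈ prev, |p.2 (u q.1)| ≤ (1 / 2) ^ (prev.length) / 4) ∧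
      q.2 (u q.1) = 1 ∧ ‖q.2‖ ≤ 3 / δ ∧ (∀ p ∈ prev, q.2 (u p.1) = 0) := by
    intro prev
    set s : Finset X := (prev.map (fun p => u p.1)).toFinset with hs
    set F : Submodule ℝ X := Submodule.span ℝ (s : Set X) with hF
    haveI hFfd : FiniteDimensional ℝ F := by
      apply FiniteDimensional.span_of_finite
      exact s.finite_toSet
    have hfar : ∃ᶠ n in atTop, δ / 3 ≤ infDist (u n) (F : Set X) :=
      freq_far_from_span hδ hlb hub hwn F hFfd
    have hev1 : ∀ᶠ n in atTop, ∀ p ∈ prev, p.1 < n :=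
      eventually_list prev _ (fun p => eventually_gt_atTop p.1)
    have hev2 : ∀ᶠ n in atTop, ∀ p ∈ prev, |p.2 (u n)| ≤ (1 / 2) ^ (prev.length) / 4 := by
      apply eventually_list prev _
      intro p
      have := hwn p.2
      have h2 : Tendsto (fun n => |p.2 (u n)|) atTop (nhds 0) := by
        rw [tendsto_zero_iff_norm_tendsto_zero] at this
        simpa [Real.norm_eq_abs] using this
      apply h2.eventually_le_const
      positivity
    obtain ⟨n, hn1, hn2, hn3⟩ := (hfar.and_eventually (hev1.and hev2)).exists
    have hFcl : IsClosed (F : Set X) := F.closed_of_finiteDimensional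
    obtain ⟨g, hg1, hg2, hg3⟩ := exists_sep_functional F hFcl (by positivity : (0:ℝ) < δ / 3) hn1
    refine ⟨(n, g), hn2, hn3, hg1, ?_, ?_⟩
    · have : 1 / (δ / 3) = 3 / δ := one_div_div _ _
      rw [← this]
      exact hg2
    · intro p hp
      apply hg3
      apply Submodule.subset_span
      simp only [hs, List.coe_toFinset, Set.mem_setOf_eq, List.mem_map]
      exact ⟨p, hp, rfl⟩
  -- recursive construction
  set step : List (ℕ × (X →L[ℝ] ℝ)) → ℕ × (X →L[ℝ] ℝ) := fun prev => (hstep prev).choose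
    with hstepdef
  set hist : ℕ → List (ℕ × (X →L[ℝ] ℝ)) :=
    fun j => Nat.rec [] (fun _ h => h ++ [step h]) j with hhist
  have hist_succ : ∀ j, hist (j + 1) = hist j ++ [step (hist j)] := fun j => rfl
  set K : ℕ → ℕ × (X →L[ℝ] ℝ) := fun j => step (hist j) with hK
  have hlen : ∀ j, (hist j).length = j := by
    intro j
    induction j with
    | zero => rfl
    | succ j ih => rw [hist_succ, List.length_append, ih]; rfl
  have hmem : ∀ j p, p ∈ hist j ↔ ∃ i, i < j ∧ K i = p := by
    intro j
    induction j with
    | zero =>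
        intro p
        constructor
        · intro h; exact absurd h List.not_mem_nil
        · rintro ⟨i, hi, _⟩; omega
    | succ j ih =>
        intro p
        rw [hist_succ, List.mem_append, List.mem_singleton, ih]
        constructor
        · rintro (⟨i, hi, rfl⟩ | rfl)
          · exact ⟨i, by omega, rfl⟩
          · exact ⟨j, by omega, rfl⟩
        · rintro ⟨i, hi, rfl⟩
          rcases Nat.lt_or_ge i j with h | h
          · exact Or.inl ⟨i, h, rfl⟩
          · have : i = j := by omega
            subst this
            exact Or.inr rfl
  have hQ : ∀ j, (∀ p ∈ hist j, p.1 < (K j).1) ∧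
      (∀ p ∈ hist j, |p.2 (u (K j).1)| ≤ (1 / 2) ^ ((hist j).length) / 4) ∧
      (K j).2 (u (K j).1) = 1 ∧ ‖(K j).2‖ ≤ 3 / δ ∧ (∀ p ∈ hist j, (K j).2 (u p.1) = 0) :=
    fun j => (hstep (hist j)).choose_spec
  refine ⟨fun j => (K j).1, fun j => (K j).2, ?_, ?_, ?_, ?_, ?_⟩
  · intro i j hij
    exact (hQ j).1 (K i) ((hmem j (K i)).2 ⟨i, hij, rfl⟩)
  · exact fun j => (hQ j).2.2.1
  · exact fun j => (hQ j).2.2.2.1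
  · intro i j hij
    exact (hQ j).2.2.2.2 (K i) ((hmem j (K i)).2 ⟨i, hij, rfl⟩)
  · intro i j hji
    have := (hQ i).2.1 (K j) ((hmem i (K j)).2 ⟨j, hji, rfl⟩)
    rwa [hlen i] at this


variable {X : Type*} [NormedAddCommGroup X] [NormedSpace ℝ X]

lemma abs_apply_le_norm (v : ZeroAtInftyContinuousMap ℕ ℝ) (j : ℕ) : |v j| ≤ ‖v‖ := by
  have h1 : ‖v.toBCF j‖ ≤ ‖v.toBCF‖ := BoundedContinuousFunction.norm_coe_le_norm _ j
  rwa [ZeroAtInftyContinuousMap.norm_toBCF_eq_norm, Real.norm_eq_abs] at h1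

lemma contains_c0 [CompleteSpace X] {u : ℕ → X} {δ C : ℝ} (hδ : 0 < δ)
    (hC : ∀ F : Finset ℕ, ‖∑ i ∈ F, u i‖ ≤ C) (hlb : ∀ n, δ ≤ ‖u n‖) :
    ContainsCopyOfC0 X := by
  classical
  have hC0 : (0 : ℝ) ≤ C := by simpa using hC ∅
  obtain ⟨k, g, hk, hg1, hg2, hg0, hgsmall⟩ := selection hδ hC hlb
  set w : ℕ → X := fun j => u (k j) with hw
  have hCw : ∀ F : Finset ℕ, ‖∑ j ∈ F, w j‖ ≤ C := by
    intro F
    have hinj : ∀ x ∈ F, ∀ y ∈ F, k x = k y → x = y := fun x _ y _ h => hk.injective h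
    have : ∑ j ∈ F, w j = ∑ i ∈ F.image k, u i := (Finset.sum_image hinj).symm
    rw [this]
    exact hC _
  -- summability of the defining series
  have hsummable : ∀ v : ZeroAtInftyContinuousMap ℕ ℝ, Summable (fun j => v j • w j) := by
    intro v
    rw [summable_iff_vanishing]
    intro e he
    obtain ⟨ε, hε, hball⟩ := Metric.mem_nhds_iff.1 he
    have hzero : Tendsto v atTop (nhds 0) := by
      have := v.zero_at_infty'
      rwa [Filter.cocompact_eq_cofinite, Nat.cofinite_eq_atTop] at this
    have hev : ∀ᶠ n in atTop, |v n| ≤ ε / (4 * C + 4) := by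
      have h2 := Metric.tendsto_nhds.mp hzero (ε / (4 * C + 4)) (by positivity)
      filter_upwards [h2] with n hn
      rw [Real.dist_eq, sub_zero] at hn
      exact le_of_lt hn
    obtain ⟨N, hN⟩ := eventually_atTop.1 hev
    refine ⟨Finset.range N, fun t hdisj => ?_⟩
    apply hball
    rw [Metric.mem_ball, dist_zero_right]
    have hbound : ‖∑ j ∈ t, v j • w j‖ ≤ 2 * C * (ε / (4 * C + 4)) := by
      apply coeff_smul_bound hCw t (fun j => v j) (by positivity)
      intro j hj
      apply hN
      by_contra hlt
      push_neg at hlt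
      exact (Finset.disjoint_left.1 hdisj) hj (Finset.mem_range.2 hlt)
    have hq : 2 * C / (4 * C + 4) ≤ 1 / 2 := by
      rw [div_le_div_iff₀ (by positivity) (by norm_num)]
      linarith
    calc ‖∑ j ∈ t, v j • w j‖ ≤ 2 * C * (ε / (4 * C + 4)) := hbound
      _ = ε * (2 * C / (4 * C + 4)) := by ring
      _ ≤ ε * (1 / 2) := mul_le_mul_of_nonneg_left hq (le_of_lt hε)
      _ < ε := by linarith
  -- the linear map
  set Tfun : ZeroAtInftyContinuousMap ℕ ℝ → X := fun v => ∑' j, v j • w j with hTfun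
  have hTbound : ∀ v, ‖Tfun v‖ ≤ (2 * C + 1) * ‖v‖ := by
    intro v
    have hhs := (hsummable v).hasSum
    have hnorms : Tendsto (fun s : Finset ℕ => ‖∑ j ∈ s, v j • w j‖) atTop
        (nhds ‖Tfun v‖) := (continuous_norm.tendsto _).comp hhs
    apply le_of_tendsto hnorms
    apply Filter.Eventually.of_forall
    intro s
    calc ‖∑ j ∈ s, v j • w j‖ ≤ 2 * C * ‖v‖ :=
          coeff_smul_bound hCw s _ (norm_nonneg v) (fun j _ => abs_apply_le_norm v j)
      _ ≤ (2 * C + 1) * ‖v‖ := by nlinarith [norm_nonneg v]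
  set Tlin : ZeroAtInftyContinuousMap ℕ ℝ →ₗ[ℝ] X :=
    { toFun := Tfun
      map_add' := by
        intro v v'
        simp only [hTfun]
        have h1 : ∀ j, ((v + v') j) • w j = v j • w j + v' j • w j := by
          intro j
          have : (v + v') j = v j + v' j := rfl
          rw [this, add_smul]
        rw [tsum_congr h1, Summable.tsum_add (hsummable v) (hsummable v')]
      map_smul' := by
        intro c v
        simp only [hTfun, RingHom.id_apply]
        have h1 : ∀ j, ((c • v) j) • w j = c • (v j • w j) := by
          intro j
          have : (c • v) j = c * v j := rfl
          rw [this, mul_smul]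
        rw [tsum_congr h1, Summable.tsum_const_smul c (hsummable v)] } with hTlin
  set T : ZeroAtInftyContinuousMap ℕ ℝ →L[ℝ] X := Tlin.mkContinuous (2 * C + 1) hTbound with hT
  have hTapp : ∀ v, T v = Tfun v := fun v => rfl
  refine ⟨T, δ / 6, by positivity, ?_⟩
  intro v
  rcases eq_or_lt_of_le (norm_nonneg v) with hv | hv
  · rw [← hv, mul_zero]
    exact norm_nonneg _
  -- key pointwise estimate
  have key : ∀ j, (δ / 3) * (|v j| - ‖v‖ / 2) ≤ ‖T v‖ := by
    intro j
    have hsum2 : Summable (fun i => v i * g j (w i)) := by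
      have := (hsummable v).map (g j) (g j).continuous
      apply this.congr
      intro i
      simp [smul_eq_mul]
    have h1 : g j (T v) = ∑' i, v i * g j (w i) := by
      rw [hTapp, hTfun]
      rw [ContinuousLinearMap.map_tsum (g j) (hsummable v)]
      apply tsum_congr
      intro i
      rw [map_smul]
      rfl
    have hsplit : ∑' i, v i * g j (w i) = v j * g j (w j)
        + ∑' i, if i = j then 0 else v i * g j (w i) :=
      Summable.tsum_eq_add_tsum_ite hsum2 j
    -- bound the tail
    set bnd : ℕ → ℝ := fun i => (‖v‖ / 4) * (1 / 2) ^ i with hbnd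
    have hbndsum : Summable bnd :=
      (summable_geometric_of_lt_one (by norm_num) (by norm_num)).mul_left _
    have hptwise : ∀ i, |if i = j then 0 else v i * g j (w i)| ≤ bnd i := by
      intro i
      have hbndi : bnd i = ‖v‖ / 4 * (1 / 2) ^ i := rfl
      rcases eq_or_ne i j with rfl | hij
      · rw [if_pos rfl, abs_zero, hbndi]
        positivity
      · rw [if_neg hij]
        rcases Nat.lt_or_ge i j with hlt | hge
        · rw [hg0 i j hlt, mul_zero, abs_zero, hbndi]
          positivity
        · have hji : j < i := by omega
          rw [abs_mul, hbndi]
          calc |v i| * |g j (w i)| ≤ ‖v‖ * ((1 / 2) ^ i / 4) := by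
                apply mul_le_mul (abs_apply_le_norm v i) (hgsmall i j hji) (abs_nonneg _)
                  (norm_nonneg v)
            _ = ‖v‖ / 4 * (1 / 2) ^ i := by ring
    have htail : |∑' i, if i = j then 0 else v i * g j (w i)| ≤ ‖v‖ / 2 := by
      have habs : Summable (fun i => |if i = j then 0 else v i * g j (w i)|) := by
        apply Summable.of_nonneg_of_le (fun i => abs_nonneg _) hptwise hbndsum
      have h2 : |∑' i, if i = j then 0 else v i * g j (w i)|
          ≤ ∑' i, |if i = j then 0 else v i * g j (w i)| := by
        have := norm_tsum_le_tsum_norm (f := fun i => if i = j then 0 else v i * g j (w i))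
          (by simpa [Real.norm_eq_abs] using habs)
        simpa [Real.norm_eq_abs] using this
      have h3 : ∑' i, |if i = j then 0 else v i * g j (w i)| ≤ ∑' i, bnd i :=
        Summable.tsum_le_tsum hptwise habs hbndsum
      have h4 : ∑' i, bnd i = ‖v‖ / 2 := by
        have hg' : ∑' i : ℕ, ((1 : ℝ) / 2) ^ i = 2 := by
          rw [tsum_geometric_of_lt_one (by norm_num) (by norm_num)]
          norm_num
        have heq2 : ∑' i, bnd i = ‖v‖ / 4 * ∑' i : ℕ, ((1 : ℝ) / 2) ^ i := by
          rw [hbnd, tsum_mul_left]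
        rw [heq2, hg']
        ring
      linarith
    have h5 : |v j| - ‖v‖ / 2 ≤ |g j (T v)| := by
      rw [h1, hsplit, hg1 j, mul_one]
      have habs2 : |v j| - |∑' i, if i = j then 0 else v i * g j (w i)|
          ≤ |v j + ∑' i, if i = j then 0 else v i * g j (w i)| := by
        have h := abs_sub_abs_le_abs_sub (v j)
          (-(∑' i, if i = j then 0 else v i * g j (w i)))
        simpa [sub_neg_eq_add] using h
      linarith
    have h6 : |g j (T v)| ≤ (3 / δ) * ‖T v‖ := by
      have h7 := (g j).le_opNorm (T v)
      have h8 : ‖g j‖ * ‖T v‖ ≤ (3 / δ) * ‖T v‖ :=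
        mul_le_mul_of_nonneg_right (hg2 j) (norm_nonneg _)
      calc |g j (T v)| = ‖g j (T v)‖ := (Real.norm_eq_abs _).symm
        _ ≤ ‖g j‖ * ‖T v‖ := h7
        _ ≤ (3 / δ) * ‖T v‖ := h8
    calc (δ / 3) * (|v j| - ‖v‖ / 2) ≤ (δ / 3) * ((3 / δ) * ‖T v‖) := by
          apply mul_le_mul_of_nonneg_left (le_trans h5 h6) (by positivity)
      _ = ‖T v‖ := by
          field_simp
  -- conclude via approximate supremum
  apply le_of_forall_pos_le_add
  intro ε hε
  set ε' : ℝ := (3 / δ) * ε with hε'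
  have hε'pos : 0 < ε' := by positivity
  have hexj : ∃ j, ‖v‖ - ε' < |v j| := by
    have hiSup : ‖v‖ = ⨆ n, ‖v.toBCF n‖ := by
      rw [← ZeroAtInftyContinuousMap.norm_toBCF_eq_norm]
      exact BoundedContinuousFunction.norm_eq_iSup_norm _
    have hlt : ‖v‖ - ε' < ⨆ n, ‖v.toBCF n‖ := by
      rw [← hiSup]; linarith
    obtain ⟨j, hj⟩ := exists_lt_of_lt_ciSup hlt
    exact ⟨j, by simpa [Real.norm_eq_abs] using hj⟩
  obtain ⟨j, hj⟩ := hexj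
  have := key j
  have h9 : (δ / 3) * ((‖v‖ - ε') - ‖v‖ / 2) ≤ (δ / 3) * (|v j| - ‖v‖ / 2) := by
    apply mul_le_mul_of_nonneg_left _ (by positivity)
    linarith
  have h10 : (δ / 3) * ((‖v‖ - ε') - ‖v‖ / 2) = δ / 6 * ‖v‖ - ε := by
    rw [hε']
    field_simp
    ring
  linarith

end Aux

section Final
open Set Metric Topology
set_option maxHeartbeats 1000000
set_option synthInstance.maxHeartbeats 400000
set_option linter.unusedSectionVars false

noncomputable def eC0 (n : ℕ) : ZeroAtInftyContinuousMap ℕ ℝ where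
  toFun := fun m => if m = n then 1 else 0
  continuous_toFun := continuous_of_discreteTopology
  zero_at_infty' := by
    rw [Filter.cocompact_eq_cofinite, Nat.cofinite_eq_atTop]
    apply Filter.Tendsto.congr' _ tendsto_const_nhds
    filter_upwards [eventually_gt_atTop n] with m hm
    exact (if_neg (by omega)).symm

lemma eC0_apply (n m : ℕ) : eC0 n m = if m = n then 1 else 0 := rfl

lemma norm_eC0 (n : ℕ) : ‖eC0 n‖ = 1 := by
  apply le_antisymm
  · rw [← ZeroAtInftyContinuousMap.norm_toBCF_eq_norm]
    rw [BoundedContinuousFunction.norm_le zero_le_one]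
    intro m
    have : (eC0 n).toBCF m = if m = n then 1 else 0 := rfl
    rw [this]
    by_cases h : m = n <;> simp [h]
  · have h1 := BoundedContinuousFunction.norm_coe_le_norm (eC0 n).toBCF n
    have h2 : (eC0 n).toBCF n = 1 := by
      show (if n = n then (1:ℝ) else 0) = 1
      simp
    rw [h2] at h1
    rw [← ZeroAtInftyContinuousMap.norm_toBCF_eq_norm]
    simpa using h1

lemma sum_C0_apply (s : Finset ℕ) (f : ℕ → ZeroAtInftyContinuousMap ℕ ℝ) (m : ℕ) :
    (∑ i ∈ s, f i) m = ∑ i ∈ s, f i m := by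
  classical
  induction s using Finset.induction_on with
  | empty => rfl
  | insert a s' hx ih =>
      rw [Finset.sum_insert hx, Finset.sum_insert hx, ← ih]
      rfl

lemma norm_sum_eC0_le (t : ℕ → Bool) (n : ℕ) :
    ‖∑ i ∈ Finset.range n, (if t i then eC0 i else 0)‖ ≤ 1 := by
  classical
  rw [← ZeroAtInftyContinuousMap.norm_toBCF_eq_norm]
  rw [BoundedContinuousFunction.norm_le zero_le_one]
  intro m
  have hcoe : (∑ i ∈ Finset.range n, (if t i then eC0 i else 0)).toBCF m
      = ∑ i ∈ Finset.range n, (if t i then eC0 i else 0) m := by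
    have := sum_C0_apply (Finset.range n) (fun i => if t i then eC0 i else 0) m
    exact this
  rw [hcoe]
  have hterm : ∀ i, ((if t i then eC0 i else 0) : ZeroAtInftyContinuousMap ℕ ℝ) m
      = if i = m then (if t i then (1:ℝ) else 0) else 0 := by
    intro i
    by_cases h : t i
    · rw [if_pos h, eC0_apply]
      by_cases h2 : i = m
      · subst h2; simp [h]
      · have h3 : ¬ m = i := fun hh => h2 hh.symm
        simp [h2, h3]
    · rw [if_neg h]
      simp [h]
  rw [Finset.sum_congr rfl (fun i _ => hterm i), Finset.sum_ite_eq' (Finset.range n) m]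
  by_cases h1 : m ∈ Finset.range n
  · rw [if_pos h1]
    by_cases h2 : t m <;> simp [h2]
  · rw [if_neg h1]; simp

variable {X : Type*} [NormedAddCommGroup X] [NormedSpace ℝ X]

lemma c0_gives_bad_series (hc0 : ContainsCopyOfC0 X) :
    ∃ x : ℕ → X, ¬ UnconditionallyConvergent x ∧
      ∃ M > (0:ℝ), ∀ t : ℕ → Bool, ∀ n,
        ‖∑ i ∈ Finset.range n, (if t i then x i else 0)‖ ≤ M := by
  obtain ⟨T, c, hc, hT⟩ := hc0
  set x : ℕ → X := fun n => T (eC0 n) with hx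
  have hxnorm : ∀ n, c ≤ ‖x n‖ := by
    intro n
    have := hT (eC0 n)
    rwa [norm_eC0, mul_one] at this
  refine ⟨x, ?_, ‖T‖ + 1, by positivity, ?_⟩
  · intro hUC
    obtain ⟨L, hL⟩ := hUC (Equiv.refl ℕ)
    have hL' : Tendsto (fun n => ∑ i ∈ Finset.range n, x i) atTop (nhds L) := by
      apply hL.congr
      intro n
      apply Finset.sum_congr rfl
      intro i _
      rfl
    have hdiff : Tendsto (fun n => (∑ i ∈ Finset.range (n+1), x i)
        - ∑ i ∈ Finset.range n, x i) atTop (nhds (L - L)) :=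
      (hL'.comp (tendsto_add_atTop_nat 1)).sub hL'
    rw [sub_self] at hdiff
    have heq : ∀ n, (∑ i ∈ Finset.range (n+1), x i) - ∑ i ∈ Finset.range n, x i = x n := by
      intro n; rw [Finset.sum_range_succ]; abel
    rw [tendsto_congr heq] at hdiff
    have hev := Metric.tendsto_nhds.mp hdiff c hc
    obtain ⟨n, hn⟩ := hev.exists
    rw [dist_zero_right] at hn
    exact absurd hn (not_lt.2 (hxnorm n))
  · intro t n
    have hrep : ∑ i ∈ Finset.range n, (if t i then x i else 0)
        = T (∑ i ∈ Finset.range n, (if t i then eC0 i else 0)) := by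
      rw [map_sum]
      apply Finset.sum_congr rfl
      intro i _
      by_cases h : t i
      · simp [h, hx]
      · simp [h]
    rw [hrep]
    calc ‖T (∑ i ∈ Finset.range n, (if t i then eC0 i else 0))‖
        ≤ ‖T‖ * ‖∑ i ∈ Finset.range n, (if t i then eC0 i else 0)‖ := T.le_opNorm _
      _ ≤ ‖T‖ * 1 := mul_le_mul_of_nonneg_left (norm_sum_eC0_le t n) T.opNorm_nonneg
      _ ≤ ‖T‖ + 1 := by linarith [norm_nonneg T]

end Final

set_option maxHeartbeats 1000000 in
set_option synthInstance.maxHeartbeats 400000 in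
theorem no_c0_iff_A_meager
    {X : Type*} [NormedAddCommGroup X] [NormedSpace ℝ X] [CompleteSpace X]
    (I : Set (Set ℕ))
    (hEmpty : ∅ ∈ I)
    (hUnion : ∀ A B : Set ℕ, A ∈ I → B ∈ I → A ∪ B ∈ I)
    (hSub : ∀ A B : Set ℕ, A ⊆ B → B ∈ I → A ∈ I)
    (hProper : (Set.univ : Set ℕ) ∉ I)
    (hFin : ∀ A : Set ℕ, A.Finite → A ∈ I)
    (hBP : IdealHasBaireProperty I) :
    ¬ ContainsCopyOfC0 X ↔
      ∀ x : ℕ → X, ¬ UnconditionallyConvergent x →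
        IsMeagre {t : ℕ → Bool | ∃ M > (0 : ℝ),
          {n : ℕ | M < ‖∑ i ∈ Finset.range n, if t i then x i else 0‖} ∈ I} := by
  classical
  have hBP' : BaireMeasurableSet (idealSet I) := hBP
  constructor
  · intro hno x hx
    by_contra hnm
    obtain ⟨m, C, hCpos, hbound⟩ := uniform_tail_bound hUnion hSub hProper hFin hBP' x hnm
    obtain ⟨δ, hδ, hblocks⟩ := blocks_of_not_UC hx
    choose Efun hE1 hE2 using hblocks
    -- the sequence of starting points
    set Nseq : ℕ → ℕ := fun j => Nat.rec m (fun _ Nj => (Efun Nj).sup id + Nj + 1) j with hNseq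
    have hNsucc : ∀ j, Nseq (j + 1) = (Efun (Nseq j)).sup id + Nseq j + 1 := fun j => rfl
    have hNzero : Nseq 0 = m := rfl
    have hNmono : StrictMono Nseq := by
      apply strictMono_nat_of_lt_succ
      intro j
      rw [hNsucc]
      omega
    have hNge : ∀ j, m ≤ Nseq j := by
      intro j
      induction j with
      | zero => exact le_of_eq hNzero.symm
      | succ j ih =>
          have h2 : Nseq j < Nseq (j + 1) := hNmono (Nat.lt_succ_self j)
          omega
    set u : ℕ → X := fun j => ∑ i ∈ Efun (Nseq j), x i with hu
    have hlbw : ∀ j, δ ≤ ‖u j‖ := fun j => hE2 (Nseq j)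
    -- elements of block j are in [Nseq j, Nseq (j+1))
    have hblockmem : ∀ j i, i ∈ Efun (Nseq j) → Nseq j ≤ i ∧ i < Nseq (j + 1) := by
      intro j i hi
      refine ⟨hE1 (Nseq j) i hi, ?_⟩
      have h1 : i ≤ (Efun (Nseq j)).sup id := Finset.le_sup (f := id) hi
      rw [hNsucc]
      omega
    have hdisj : ∀ j j', j < j' → Disjoint (Efun (Nseq j)) (Efun (Nseq j')) := by
      intro j j' hjj'
      rw [Finset.disjoint_left]
      intro i hij hij'
      have h1 := (hblockmem j i hij).2
      have h2 := (hblockmem j' i hij').1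
      have h3 : Nseq (j + 1) ≤ Nseq j' := hNmono.monotone (Nat.succ_le_of_lt hjj')
      omega
    have hCw : ∀ F : Finset ℕ, ‖∑ j ∈ F, u j‖ ≤ C := by
      intro F
      have hpd : (F : Set ℕ).PairwiseDisjoint (fun j => Efun (Nseq j)) := by
        intro j _ j' _ hne
        rcases Nat.lt_or_ge j j' with h | h
        · exact hdisj j j' h
        · have h2 : j' < j := by omega
          exact (hdisj j' j h2).symm
      have hsum : ∑ j ∈ F, u j = ∑ i ∈ F.biUnion (fun j => Efun (Nseq j)), x i :=
        (Finset.sum_biUnion hpd).symm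
      rw [hsum]
      apply hbound
      intro i hi
      rw [Finset.mem_biUnion] at hi
      obtain ⟨j, _, hij⟩ := hi
      exact le_trans (hNge j) (hblockmem j i hij).1
    exact hno (contains_c0 hδ hCw hlbw)
  · intro hA hc0
    obtain ⟨x, hxUC, M, hM, hbd⟩ := c0_gives_bad_series hc0
    have hmeag := hA x hxUC
    have huniv : {t : ℕ → Bool | ∃ M > (0 : ℝ),
        {n : ℕ | M < ‖∑ i ∈ Finset.range n, if t i then x i else 0‖} ∈ I} = Set.univ := by
      apply Set.eq_univ_iff_forall.2
      intro t
      refine ⟨M, hM, ?_⟩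
      have : {n : ℕ | M < ‖∑ i ∈ Finset.range n, if t i then x i else 0‖} = ∅ := by
        apply Set.eq_empty_iff_forall_notMem.2
        intro n hn
        simp only [Set.mem_setOf_eq] at hn
        exact absurd hn (not_lt.2 (hbd t n))
      rw [this]
      exact hEmpty
    rw [huniv] at hmeag
    have hres : (Set.univ : Set (ℕ → Bool))ᶜ ∈ residual _ := hmeag
    rw [Set.compl_univ] at hres
    have hd := dense_of_mem_residual hres
    obtain ⟨t, ht⟩ := hd.nonempty
    exact absurd ht (Set.notMem_empty t)
end
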